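/- arXiv:1104.0959 — 5 statements merged into one kernel-verified Lean document; each statement's English description precedes it below -/
import Mathlib

section
/- Let ω > 0. A vector f ∈ H belongs to PW_ω(D) if and only if f ∈ Dom(D^k) for every k ∈ ℕ and the supremum sup_{k ∈ ℕ} ( ω^{−k} ‖D^k f‖ ) is finite. -/
open MeasureTheory Complex Filter Topology
open scoped ENNReal Real

set_option linter.unusedSectionVars false

variable {E : Type*} [NormedAddCommGroup E] [InnerProductSpace ℂ E]
  [CompleteSpace E] [SecondCountableTopology E]

/-- The Paley–Wiener space `PW_ω(D)` of all `f ∈ H = L²(μ; E)` whose "spectral transform"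
(the function itself, in the multiplication-operator model of `D`) is supported in `[0, ω]`. -/
def PW {E : Type*} [NormedAddCommGroup E] [InnerProductSpace ℂ E]
    (μ : Measure ℝ) (ω : ℝ) : Set (Lp E 2 μ) :=
  {f | ∀ᵐ x ∂μ, ω < x → f x = 0}

/-- Let `ω > 0`. A vector `f ∈ H` belongs to `PW_ω(D)` if and only if
`f ∈ Dom(D^k)` for every `k ∈ ℕ` and `sup_{k ∈ ℕ} ( ω^{−k} ‖D^k f‖ )` is finite. -/
theorem mem_PW_iff_bddAbove
    (μ : Measure ℝ) [SigmaFinite μ] (hμ : μ (Set.Iio 0) = 0)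
    (ω : ℝ) (hω : 0 < ω) (f : Lp E 2 μ) :
    f ∈ PW (E := E) μ ω ↔
      ∃ hk : ∀ k : ℕ, MemLp (fun x : ℝ => x ^ k • f x) 2 μ,
        ∃ C : ℝ, ∀ k : ℕ, (ω ^ k)⁻¹ * ‖(hk k).toLp _‖ ≤ C := by
  have h0 : ∀ᵐ x ∂μ, (0 : ℝ) ≤ x := by
    rw [ae_iff]
    refine measure_mono_null (fun x hx => ?_) hμ
    simpa [Set.mem_Iio] using not_le.mp hx
  constructor
  · -- Forward direction
    intro hf
    have hf' : ∀ᵐ x ∂μ, ω < x → f x = 0 := hf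
    have hb : ∀ k : ℕ, ∀ᵐ x ∂μ, ‖x ^ k • f x‖ ≤ ‖(ω ^ k : ℝ) • f x‖ := by
      intro k
      filter_upwards [hf', h0] with x hx h0x
      rcases le_or_gt x ω with hxc | hxc
      · rw [norm_smul, norm_smul, Real.norm_eq_abs, Real.norm_eq_abs,
          _root_.abs_of_nonneg (pow_nonneg h0x k), _root_.abs_of_nonneg (pow_nonneg hω.le k)]
        exact mul_le_mul_of_nonneg_right (pow_le_pow_left₀ h0x hxc k) (norm_nonneg _)
      · simp [hx hxc]
    have hk : ∀ k : ℕ, MemLp (fun x : ℝ => x ^ k • f x) 2 μ := by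
      intro k
      refine MemLp.of_le (((Lp.memLp f).const_smul (ω ^ k : ℝ))) ?_ (hb k)
      exact (measurable_id.pow_const k).aestronglyMeasurable.smul (Lp.aestronglyMeasurable f)
    refine ⟨hk, ‖f‖, fun k => ?_⟩
    have h1 : eLpNorm (fun x : ℝ => x ^ k • f x) 2 μ ≤
        eLpNorm (fun x : ℝ => (ω ^ k : ℝ) • f x) 2 μ := eLpNorm_mono_ae (hb k)
    have h2 : eLpNorm (fun x : ℝ => (ω ^ k : ℝ) • f x) 2 μ =
        (‖(ω ^ k : ℝ)‖₊ : ℝ≥0∞) * eLpNorm (⇑f) 2 μ := by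
      exact eLpNorm_const_smul (ω ^ k : ℝ) (⇑f) (2 : ℝ≥0∞) (μ := μ)
    have hfin : (‖(ω ^ k : ℝ)‖₊ : ℝ≥0∞) * eLpNorm (⇑f) 2 μ ≠ ∞ :=
      ENNReal.mul_ne_top ENNReal.coe_ne_top (Lp.eLpNorm_ne_top f)
    have h3 : ‖(hk k).toLp _‖ ≤ ω ^ k * ‖f‖ := by
      rw [Lp.norm_toLp]
      calc (eLpNorm (fun x : ℝ => x ^ k • f x) 2 μ).toReal
          ≤ ((‖(ω ^ k : ℝ)‖₊ : ℝ≥0∞) * eLpNorm (⇑f) 2 μ).toReal := by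
            refine ENNReal.toReal_mono hfin ?_
            rw [← h2]; exact h1
        _ = ω ^ k * ‖f‖ := by
            rw [ENNReal.toReal_mul, ENNReal.coe_toReal, coe_nnnorm, Real.norm_eq_abs,
              _root_.abs_of_nonneg (pow_nonneg hω.le k), Lp.norm_def]
    rw [inv_mul_le_iff₀ (pow_pos hω k)]
    exact h3
  · -- Backward direction
    rintro ⟨hk, C, hC⟩
    have hC0 : 0 ≤ C := le_trans (by positivity) (hC 0)
    -- Bound on the square integral of the k-th moment
    have hsq : ∀ k : ℕ, ∫⁻ x, (‖x ^ k • f x‖₊ : ℝ≥0∞) ^ 2 ∂μ =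
        (eLpNorm (fun x : ℝ => x ^ k • f x) 2 μ) ^ 2 := by
      intro k
      rw [eLpNorm_eq_lintegral_rpow_enorm_toReal two_ne_zero ENNReal.ofNat_ne_top]
      rw [← ENNReal.rpow_natCast _ 2, ← ENNReal.rpow_mul]
      norm_num
      rfl
    have hbound : ∀ k : ℕ, ∫⁻ x, (‖x ^ k • f x‖₊ : ℝ≥0∞) ^ 2 ∂μ ≤
        ENNReal.ofReal ((C * ω ^ k) ^ 2) := by
      intro k
      have h1 : ‖(hk k).toLp _‖ ≤ C * ω ^ k := by
        have h := hC k
        rw [inv_mul_le_iff₀ (pow_pos hω k)] at h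
        calc ‖(hk k).toLp _‖ ≤ ω ^ k * C := h
          _ = C * ω ^ k := mul_comm _ _
      rw [Lp.norm_toLp] at h1
      have h2 : eLpNorm (fun x : ℝ => x ^ k • f x) 2 μ ≤ ENNReal.ofReal (C * ω ^ k) :=
        (ENNReal.le_ofReal_iff_toReal_le (hk k).2.ne (by positivity)).mpr h1
      rw [hsq k, ENNReal.ofReal_pow (by positivity)]
      exact pow_le_pow_left₀ zero_le h2 2
    -- sets S n = Ioi (a n)
    set a : ℕ → ℝ := fun n => ω * (1 + 1 / ((n : ℝ) + 1)) with ha_def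
    have haω : ∀ n, ω < a n := by
      intro n
      have hn1 : (0 : ℝ) < (n : ℝ) + 1 := by positivity
      have h2 : (0 : ℝ) < 1 / ((n : ℝ) + 1) := by positivity
      simp only [ha_def]
      nlinarith [mul_pos hω h2]
    have hq : ∀ n, (ω / a n) ^ 2 < 1 := by
      intro n
      have ha0 : 0 < a n := hω.trans (haω n)
      have h1 : ω / a n < 1 := (div_lt_one ha0).mpr (haω n)
      have h2 : 0 ≤ ω / a n := by positivity
      nlinarith
    have key : ∀ n k : ℕ, ∫⁻ x in Set.Ioi (a n), (‖f x‖₊ : ℝ≥0∞) ^ 2 ∂μ ≤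
        ENNReal.ofReal (C ^ 2 * ((ω / a n) ^ 2) ^ k) := by
      intro n k
      have ha0 : 0 < a n := hω.trans (haω n)
      have hcne : (ENNReal.ofReal (((a n) ^ k)⁻¹)) ^ 2 ≠ ∞ :=
        ENNReal.pow_ne_top ENNReal.ofReal_ne_top
      calc ∫⁻ x in Set.Ioi (a n), (‖f x‖₊ : ℝ≥0∞) ^ 2 ∂μ
          ≤ ∫⁻ x in Set.Ioi (a n),
              (ENNReal.ofReal (((a n) ^ k)⁻¹)) ^ 2 * (‖x ^ k • f x‖₊ : ℝ≥0∞) ^ 2 ∂μ := by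
            refine lintegral_mono_ae ?_
            filter_upwards [ae_restrict_mem measurableSet_Ioi] with x hx
            have hx0 : 0 < x := ha0.trans hx
            have hreal : ‖f x‖ ≤ ((a n) ^ k)⁻¹ * ‖x ^ k • f x‖ := by
              rw [norm_smul, Real.norm_eq_abs, _root_.abs_of_nonneg (pow_nonneg hx0.le k)]
              have hax : (a n) ^ k ≤ x ^ k := pow_le_pow_left₀ ha0.le (le_of_lt hx) k
              calc ‖f x‖ = ((a n) ^ k)⁻¹ * ((a n) ^ k * ‖f x‖) := by
                    field_simp
                _ ≤ ((a n) ^ k)⁻¹ * (x ^ k * ‖f x‖) := by gcongr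
            have henn : (‖f x‖₊ : ℝ≥0∞) ≤
                ENNReal.ofReal (((a n) ^ k)⁻¹) * (‖x ^ k • f x‖₊ : ℝ≥0∞) := by
              rw [← enorm_eq_nnnorm, ← enorm_eq_nnnorm, ← ofReal_norm, ← ofReal_norm,
                ← ENNReal.ofReal_mul (by positivity)]
              exact ENNReal.ofReal_le_ofReal hreal
            calc (‖f x‖₊ : ℝ≥0∞) ^ 2
                ≤ (ENNReal.ofReal (((a n) ^ k)⁻¹) * (‖x ^ k • f x‖₊ : ℝ≥0∞)) ^ 2 :=
                  pow_le_pow_left₀ zero_le henn 2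
              _ = (ENNReal.ofReal (((a n) ^ k)⁻¹)) ^ 2 * (‖x ^ k • f x‖₊ : ℝ≥0∞) ^ 2 :=
                  mul_pow _ _ 2
        _ = (ENNReal.ofReal (((a n) ^ k)⁻¹)) ^ 2 *
              ∫⁻ x in Set.Ioi (a n), (‖x ^ k • f x‖₊ : ℝ≥0∞) ^ 2 ∂μ :=
            lintegral_const_mul' _ _ hcne
        _ ≤ (ENNReal.ofReal (((a n) ^ k)⁻¹)) ^ 2 *
              ∫⁻ x, (‖x ^ k • f x‖₊ : ℝ≥0∞) ^ 2 ∂μ := by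
            gcongr
            exact Measure.restrict_le_self
        _ ≤ (ENNReal.ofReal (((a n) ^ k)⁻¹)) ^ 2 * ENNReal.ofReal ((C * ω ^ k) ^ 2) := by
            gcongr
            exact hbound k
        _ = ENNReal.ofReal (C ^ 2 * ((ω / a n) ^ 2) ^ k) := by
            rw [← ENNReal.ofReal_pow (by positivity), ← ENNReal.ofReal_mul (by positivity)]
            congr 1
            have h4 : ((ω / a n) ^ 2) ^ k = (ω ^ k * ((a n) ^ k)⁻¹) ^ 2 := by
              rw [← pow_mul, mul_comm 2 k, pow_mul, div_pow, div_eq_mul_inv]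
            rw [h4]; ring
    have hT : ∀ n : ℕ, ∫⁻ x in Set.Ioi (a n), (‖f x‖₊ : ℝ≥0∞) ^ 2 ∂μ = 0 := by
      intro n
      refine le_antisymm ?_ zero_le
      have htend : Tendsto (fun k : ℕ => C ^ 2 * ((ω / a n) ^ 2) ^ k) atTop (𝓝 0) := by
        have := tendsto_pow_atTop_nhds_zero_of_lt_one (by positivity) (hq n)
        simpa using this.const_mul (C ^ 2)
      have htend' : Tendsto (fun k : ℕ => ENNReal.ofReal (C ^ 2 * ((ω / a n) ^ 2) ^ k))
          atTop (𝓝 0) := by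
        have := (ENNReal.tendsto_ofReal htend)
        simpa using this
      exact ge_of_tendsto' htend' (key n)
    have hmeas : ∀ n : ℕ, AEMeasurable (fun x : ℝ => (‖f x‖₊ : ℝ≥0∞) ^ 2)
        (μ.restrict (Set.Ioi (a n))) :=
      fun n => ((Lp.aestronglyMeasurable f).restrict.enorm).pow_const 2
    have hzero : ∀ n : ℕ, ∀ᵐ x ∂μ, x ∈ Set.Ioi (a n) → f x = 0 := by
      intro n
      have := (setLIntegral_eq_zero_iff' measurableSet_Ioi (hmeas n)).mp (hT n)
      filter_upwards [this] with x hx hxs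
      have h := hx hxs
      simpa using h
    rw [PW, Set.mem_setOf_eq]
    have hall : ∀ᵐ x ∂μ, ∀ n : ℕ, x ∈ Set.Ioi (a n) → f x = 0 := ae_all_iff.mpr hzero
    filter_upwards [hall] with x hx hωx
    obtain ⟨n, hn⟩ := exists_nat_gt (ω / (x - ω))
    refine hx n ?_
    have hxω : 0 < x - ω := sub_pos.mpr hωx
    have hn1 : (0 : ℝ) < (n : ℝ) + 1 := by positivity
    have h1 : ω / (x - ω) < (n : ℝ) + 1 := hn.trans (by linarith)
    rw [div_lt_iff₀ hxω] at h1
    have h2 : ω / ((n : ℝ) + 1) < x - ω := (div_lt_iff₀ hn1).mpr (by nlinarith)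
    have h3 : a n = ω + ω / ((n : ℝ) + 1) := by
      rw [ha_def]
      field_simp
    rw [Set.mem_Ioi, h3]
    linarith
end

section
/- Let f ∈ H and 0 < ω < ∞. Then f belongs to PW_ω(D) with [0,ω] the smallest interval [0,ω'] such that f ∈ PW_{ω'}(D), if and only if f ∈ Dom(D^k) for every k ∈ ℕ and liminf_{k→∞} ‖D^k f‖^{1/k} = ω. -/
open MeasureTheory Complex Filter
open scoped ENNReal Real

set_option linter.unusedSectionVars false

variable {E : Type*} [NormedAddCommGroup E] [InnerProductSpace ℂ E]
  [CompleteSpace E] [SecondCountableTopology E]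

section Aux

variable {μ : Measure ℝ} {f : Lp E 2 μ}

/-- Characterization of membership in `PW` via the `L²` norm on `(s, ∞)`. -/
lemma pw_iff_eLpNorm (f : Lp E 2 μ) (s : ℝ) :
    f ∈ PW (E := E) μ s ↔ eLpNorm (⇑f) 2 (μ.restrict (Set.Ioi s)) = 0 := by
  rw [eLpNorm_eq_zero_iff ((Lp.aestronglyMeasurable f).restrict) two_ne_zero]
  simp only [EventuallyEq, Pi.zero_apply, ae_restrict_iff' measurableSet_Ioi, Set.mem_Ioi]
  exact Iff.rfl

/-- Upper bound: if `f ∈ PW μ s`, then `x ^ k • f x` is in `L²` with norm at most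
`s ^ k` times the norm of `f`. -/
lemma pw_upper (hpos : ∀ᵐ x ∂μ, 0 ≤ x) {s : ℝ} (hs : 0 < s)
    (hf : f ∈ PW (E := E) μ s) (k : ℕ) :
    MemLp (fun x : ℝ => x ^ k • f x) 2 μ ∧
      eLpNorm (fun x : ℝ => x ^ k • f x) 2 μ ≤
        ENNReal.ofReal (s ^ k) * eLpNorm (⇑f) 2 μ := by
  have hf' : ∀ᵐ x ∂μ, s < x → f x = 0 := hf
  have hae : ∀ᵐ x ∂μ, ‖x ^ k • f x‖ ≤ ‖(s ^ k : ℝ) • f x‖ := by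
    filter_upwards [hpos, hf'] with x hx hxf
    by_cases hxs : x ≤ s
    · rw [norm_smul, norm_smul]
      have h1 : ‖x ^ k‖ ≤ ‖(s ^ k : ℝ)‖ := by
        rw [Real.norm_eq_abs, Real.norm_eq_abs, _root_.abs_of_nonneg (pow_nonneg hx k),
          _root_.abs_of_nonneg (pow_nonneg hs.le k)]
        exact pow_le_pow_left₀ hx hxs k
      exact mul_le_mul_of_nonneg_right h1 (norm_nonneg _)
    · rw [hxf (lt_of_not_ge hxs)]; simp
  have hmeas : AEStronglyMeasurable (fun x : ℝ => x ^ k • f x) μ :=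
    (measurable_id.pow_const k).aestronglyMeasurable.smul (Lp.aestronglyMeasurable f)
  have hsm : MemLp (fun x : ℝ => (s ^ k : ℝ) • f x) 2 μ :=
    (Lp.memLp f).const_smul (s ^ k : ℝ)
  refine ⟨hsm.of_le hmeas hae, ?_⟩
  calc eLpNorm (fun x : ℝ => x ^ k • f x) 2 μ
      ≤ eLpNorm (fun x : ℝ => (s ^ k : ℝ) • f x) 2 μ := eLpNorm_mono_ae hae
    _ = ‖(s ^ k : ℝ)‖₊ * eLpNorm (⇑f) 2 μ := eLpNorm_const_smul (𝕜 := ℝ) (s ^ k) (⇑f) 2 μ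
    _ = ENNReal.ofReal (s ^ k) * eLpNorm (⇑f) 2 μ := by
        congr 1
        exact Real.enorm_eq_ofReal (pow_nonneg hs.le k)

/-- Lower bound: the `L²` norm of `x ^ k • f x` dominates `s ^ k` times the norm of
`f` on `(s, ∞)`. -/
lemma pw_lower {s : ℝ} (hs : 0 < s) (k : ℕ) :
    ENNReal.ofReal (s ^ k) * eLpNorm (⇑f) 2 (μ.restrict (Set.Ioi s)) ≤
      eLpNorm (fun x : ℝ => x ^ k • f x) 2 μ := by
  have hae : ∀ᵐ x ∂μ.restrict (Set.Ioi s), ‖(s ^ k : ℝ) • f x‖ ≤ ‖x ^ k • f x‖ := by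
    rw [ae_restrict_iff' measurableSet_Ioi]
    refine ae_of_all _ fun x hx => ?_
    rw [norm_smul, norm_smul]
    have h1 : ‖(s ^ k : ℝ)‖ ≤ ‖x ^ k‖ := by
      rw [Real.norm_eq_abs, Real.norm_eq_abs, _root_.abs_of_nonneg (pow_nonneg hs.le k),
        _root_.abs_of_nonneg (pow_nonneg (hs.trans hx).le k)]
      exact pow_le_pow_left₀ hs.le hx.le k
    exact mul_le_mul_of_nonneg_right h1 (norm_nonneg _)
  calc ENNReal.ofReal (s ^ k) * eLpNorm (⇑f) 2 (μ.restrict (Set.Ioi s))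
      = ‖(s ^ k : ℝ)‖₊ * eLpNorm (⇑f) 2 (μ.restrict (Set.Ioi s)) := by
        congr 1
        exact (Real.enorm_eq_ofReal (pow_nonneg hs.le k)).symm
    _ = eLpNorm (fun x : ℝ => (s ^ k : ℝ) • f x) 2 (μ.restrict (Set.Ioi s)) :=
        (eLpNorm_const_smul (𝕜 := ℝ) (s ^ k) (⇑f) 2 (μ.restrict (Set.Ioi s))).symm
    _ ≤ eLpNorm (fun x : ℝ => x ^ k • f x) 2 (μ.restrict (Set.Ioi s)) := eLpNorm_mono_ae hae
    _ ≤ eLpNorm (fun x : ℝ => x ^ k • f x) 2 μ :=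
        eLpNorm_mono_measure _ Measure.restrict_le_self

/-- `a * c ^ (1 / k) → a` as `k → ∞` for `c > 0`. -/
lemma tendsto_mul_rpow_one_div (a : ℝ) {c : ℝ} (hc : 0 < c) :
    Tendsto (fun k : ℕ => a * c ^ (1 / (k : ℝ))) atTop (nhds a) := by
  have h1 : Tendsto (fun k : ℕ => Real.log c * (1 / (k : ℝ))) atTop (nhds 0) := by
    have := tendsto_one_div_atTop_nhds_zero_nat.const_mul (Real.log c)
    simpa using this
  have h2 : Tendsto (fun k : ℕ => Real.exp (Real.log c * (1 / (k : ℝ)))) atTop (nhds 1) := by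
    have := (Real.continuous_exp.tendsto 0).comp h1
    simpa [Function.comp_def] using this
  have h3 : (fun k : ℕ => a * c ^ (1 / (k : ℝ)))
      = fun k : ℕ => a * Real.exp (Real.log c * (1 / (k : ℝ))) := by
    funext k
    rw [Real.rpow_def_of_pos hc]
  rw [h3]
  simpa using h2.const_mul a

/-- `(s ^ k * c) ^ (1 / k) = s * c ^ (1 / k)` for `k ≥ 1`, `s, c ≥ 0`. -/
lemma rpow_pow_mul {s c : ℝ} (hs : 0 ≤ s) (hc : 0 ≤ c) {k : ℕ} (hk : 1 ≤ k) :
    (s ^ k * c) ^ (1 / (k : ℝ)) = s * c ^ (1 / (k : ℝ)) := by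
  have hk0 : (k : ℝ) ≠ 0 := Nat.cast_ne_zero.mpr (by omega)
  rw [Real.mul_rpow (pow_nonneg hs k) hc, ← Real.rpow_natCast s k, ← Real.rpow_mul hs]
  rw [mul_one_div, div_self hk0, Real.rpow_one]

/-- If eventually `m ≤ u k`, then `liminf u` is either `0` (junk) or at least `m`. -/
lemma liminf_lower_aux {u : ℕ → ℝ} {m : ℝ} (h : ∀ᶠ k in atTop, m ≤ u k) :
    Filter.liminf u atTop = 0 ∨ m ≤ Filter.liminf u atTop := by
  rw [Filter.liminf_eq]
  by_cases hb : BddAbove {a | ∀ᶠ k in atTop, a ≤ u k}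
  · exact Or.inr (le_csSup hb h)
  · exact Or.inl (Real.sSup_of_not_bddAbove hb)

end Aux

/-- Let `f ∈ H` and `0 < ω < ∞`. Then `f ∈ PW_ω(D)` with `[0, ω]` the smallest
interval `[0, ω']` such that `f ∈ PW_{ω'}(D)`, if and only if `f ∈ Dom(D^k)` for every
`k ∈ ℕ` and `liminf_{k→∞} ‖D^k f‖^{1/k} = ω`. -/
theorem mem_PW_min_iff_liminf
    (μ : Measure ℝ) [SigmaFinite μ] (hμ : μ (Set.Iio 0) = 0)
    (f : Lp E 2 μ) (ω : ℝ) (hω : 0 < ω) :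
    (f ∈ PW (E := E) μ ω ∧ ∀ ω' : ℝ, 0 < ω' → f ∈ PW (E := E) μ ω' → ω ≤ ω') ↔
      ∃ hk : ∀ k : ℕ, MemLp (fun x : ℝ => x ^ k • f x) 2 μ,
        Filter.liminf (fun k : ℕ => ‖(hk k).toLp _‖ ^ (1 / (k : ℝ))) atTop = ω := by
  have hpos : ∀ᵐ x ∂μ, 0 ≤ x := by
    rw [ae_iff]
    convert hμ using 2
    ext x
    simp [not_le]
  set Nr : ℕ → ℝ := fun k => (eLpNorm (fun x : ℝ => x ^ k • f x) 2 μ).toReal with hNrdef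
  set u : ℕ → ℝ := fun k => Nr k ^ (1 / (k : ℝ)) with hudef
  have hu0 : ∀ k, 0 ≤ u k := fun k => Real.rpow_nonneg ENNReal.toReal_nonneg _
  have hubdd : IsBoundedUnder (· ≥ ·) atTop u := isBoundedUnder_of ⟨0, fun k => hu0 k⟩
  -- upper bound on `u` from membership in a PW space
  have upper : ∀ {s : ℝ}, 0 < s → f ∈ PW (E := E) μ s →
      ∀ᶠ k in atTop, u k ≤ s * ‖f‖ ^ (1 / (k : ℝ)) := by
    intro s hs hmem
    filter_upwards [eventually_ge_atTop 1] with k hk1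
    have hle := (pw_upper hpos hs hmem k).2
    have hfin : ENNReal.ofReal (s ^ k) * eLpNorm (⇑f) 2 μ ≠ ∞ :=
      ENNReal.mul_ne_top ENNReal.ofReal_ne_top (Lp.eLpNorm_lt_top f).ne
    have hNr : Nr k ≤ s ^ k * ‖f‖ := by
      have := ENNReal.toReal_mono hfin hle
      rwa [ENNReal.toReal_mul, ENNReal.toReal_ofReal (pow_nonneg hs.le k),
        ← Lp.norm_def] at this
    calc u k ≤ (s ^ k * ‖f‖) ^ (1 / (k : ℝ)) :=
          Real.rpow_le_rpow ENNReal.toReal_nonneg hNr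
            (by positivity)
      _ = s * ‖f‖ ^ (1 / (k : ℝ)) := rpow_pow_mul hs.le (norm_nonneg _) hk1
  -- lower bound on `u` from non-membership in a PW space
  have lower : ∀ {s : ℝ}, 0 < s → f ∉ PW (E := E) μ s →
      (∀ k : ℕ, MemLp (fun x : ℝ => x ^ k • f x) 2 μ) →
      ∃ c : ℝ, 0 < c ∧ ∀ᶠ k : ℕ in atTop, s * c ^ (1 / (k : ℝ)) ≤ u k := by
    intro s hs hmem hk
    rw [pw_iff_eLpNorm] at hmem
    set C := eLpNorm (⇑f) 2 (μ.restrict (Set.Ioi s)) with hCdef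
    have hCfin : C ≠ ∞ :=
      ((eLpNorm_mono_measure _ Measure.restrict_le_self).trans_lt (Lp.eLpNorm_lt_top f)).ne
    have hc : 0 < C.toReal := ENNReal.toReal_pos hmem hCfin
    refine ⟨C.toReal, hc, ?_⟩
    filter_upwards [eventually_ge_atTop 1] with k hk1
    have hle := pw_lower (f := f) hs k
    have hNr : s ^ k * C.toReal ≤ Nr k := by
      have := ENNReal.toReal_mono (hk k).2.ne hle
      rwa [ENNReal.toReal_mul, ENNReal.toReal_ofReal (pow_nonneg hs.le k)] at this
    calc s * C.toReal ^ (1 / (k : ℝ)) = (s ^ k * C.toReal) ^ (1 / (k : ℝ)) :=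
          (rpow_pow_mul hs.le ENNReal.toReal_nonneg hk1).symm
      _ ≤ u k := Real.rpow_le_rpow (by positivity) hNr (by positivity)
  constructor
  · rintro ⟨hPW, hmin⟩
    have hkAll : ∀ k : ℕ, MemLp (fun x : ℝ => x ^ k • f x) 2 μ :=
      fun k => (pw_upper hpos hω hPW k).1
    refine ⟨hkAll, ?_⟩
    have hgoal : Filter.liminf u atTop = ω := by
      -- f ≠ 0 from minimality
      have hne : f ≠ 0 := by
        intro h0
        have : f ∈ PW (E := E) μ (ω / 2) := by
          rw [h0]
          have : ∀ᵐ x ∂μ, (0 : Lp E 2 μ) x = 0 := Lp.coeFn_zero E 2 μ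
          filter_upwards [this] with x hx _
          exact hx
        have := hmin (ω / 2) (by linarith) this
        linarith
      have hfpos : 0 < ‖f‖ := norm_pos_iff.mpr hne
      -- liminf u ≤ ω
      have hv : Tendsto (fun k : ℕ => ω * ‖f‖ ^ (1 / (k : ℝ))) atTop (nhds ω) :=
        tendsto_mul_rpow_one_div ω hfpos
      have hle : Filter.liminf u atTop ≤ ω := by
        have := Filter.liminf_le_liminf (upper hω hPW) hubdd
          (hv.isBoundedUnder_le.isCoboundedUnder_ge)
        rwa [hv.liminf_eq] at this
      -- ω ≤ liminf u
      have hcobdd : IsCoboundedUnder (· ≥ ·) atTop u :=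
        (hv.isBoundedUnder_le.mono_le (upper hω hPW)).isCoboundedUnder_ge
      have hge : ω ≤ Filter.liminf u atTop := by
        refine le_of_forall_sub_le fun ε hε => ?_
        rcases lt_or_ge ε ω with hεω | hεω
        · have hsε : 0 < ω - ε := by linarith
          have hnotmem : f ∉ PW (E := E) μ (ω - ε) := by
            intro hmem
            have := hmin (ω - ε) hsε hmem
            linarith
          obtain ⟨c, hc, hev⟩ := lower hsε hnotmem hkAll
          have hw : Tendsto (fun k : ℕ => (ω - ε) * c ^ (1 / (k : ℝ))) atTop
              (nhds (ω - ε)) := tendsto_mul_rpow_one_div _ hc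
          have := Filter.liminf_le_liminf hev hw.isBoundedUnder_ge hcobdd
          rwa [hw.liminf_eq] at this
        · have : (0 : ℝ) ≤ Filter.liminf u atTop :=
            le_liminf_of_le hcobdd (Eventually.of_forall hu0)
          linarith
      linarith
    have heq : (fun k : ℕ => ‖(hkAll k).toLp _‖ ^ (1 / (k : ℝ))) = u := by
      funext k
      rw [Lp.norm_toLp]
    rw [heq]
    exact hgoal
  · rintro ⟨hk, hlim⟩
    have hlim' : Filter.liminf u atTop = ω := by
      have heq : (fun k : ℕ => ‖(hk k).toLp _‖ ^ (1 / (k : ℝ))) = u := by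
        funext k
        rw [Lp.norm_toLp]
      rwa [heq] at hlim
    -- f is nonzero
    have hne : eLpNorm (⇑f) 2 μ ≠ 0 := by
      intro h0
      have hNr0 : ∀ k, Nr k = 0 := by
        intro k
        have hf0 : ⇑f =ᵐ[μ] 0 :=
          (eLpNorm_eq_zero_iff (Lp.aestronglyMeasurable f) two_ne_zero).mp h0
        have : (fun x : ℝ => x ^ k • f x) =ᵐ[μ] 0 := by
          filter_upwards [hf0] with x hx
          simp [hx]
        simp [hNrdef, eLpNorm_congr_ae this]
      have : ∀ᶠ k in atTop, u k = 0 := by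
        filter_upwards [eventually_ge_atTop 1] with k hk1
        have hk0 : (1 : ℝ) / (k : ℝ) ≠ 0 := by
          apply one_div_ne_zero
          exact_mod_cast (by omega : k ≠ 0)
        show Nr k ^ (1 / (k : ℝ)) = 0
        rw [hNr0 k]
        exact Real.zero_rpow hk0
      have : Filter.liminf u atTop = 0 := by
        have htend : Tendsto u atTop (nhds 0) :=
          Tendsto.congr' (this.mono fun k hk => hk.symm)
            tendsto_const_nhds
        exact htend.liminf_eq
      rw [hlim'] at this
      linarith
    have hfpos : 0 < ‖f‖ := by
      rw [Lp.norm_def]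
      exact ENNReal.toReal_pos hne (Lp.eLpNorm_lt_top f).ne
    constructor
    · -- f ∈ PW μ ω
      by_contra hc
      have hexn : ∃ n : ℕ, f ∉ PW (E := E) μ (ω + 1 / ((n : ℝ) + 1)) := by
        by_contra hall
        push_neg at hall
        apply hc
        have : ∀ᵐ x ∂μ, ∀ n : ℕ, ω + 1 / ((n : ℝ) + 1) < x → f x = 0 :=
          ae_all_iff.mpr fun n => hall n
        filter_upwards [this] with x hx hωx
        obtain ⟨n, hn⟩ := exists_nat_one_div_lt (show (0 : ℝ) < x - ω by linarith)
        exact hx n (by linarith)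
      have hexn' : ∃ s : ℝ, ω < s ∧ f ∉ PW (E := E) μ s := by
        obtain ⟨n, hn⟩ := hexn
        exact ⟨ω + 1 / ((n : ℝ) + 1), lt_add_of_pos_right _ (by positivity), hn⟩
      obtain ⟨s, hsω, hn⟩ := hexn'
      obtain ⟨c, hc', hev⟩ := lower (hω.trans hsω) hn hk
      have hw : Tendsto (fun k : ℕ => s * c ^ (1 / (k : ℝ))) atTop (nhds s) :=
        tendsto_mul_rpow_one_div _ hc'
      have hmω : ω < (ω + s) / 2 := by linarith
      have hms : (ω + s) / 2 < s := by linarith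
      have hev' : ∀ᶠ k : ℕ in atTop, (ω + s) / 2 ≤ u k := by
        filter_upwards [hev, Filter.Tendsto.eventually_const_lt hms hw] with k h1 h2
        linarith
      rcases liminf_lower_aux hev' with h0 | hge
      · rw [hlim'] at h0; linarith
      · rw [hlim'] at hge; linarith
    · -- minimality
      intro ω' hω' hmem
      by_contra hlt
      push_neg at hlt
      have hv : Tendsto (fun k : ℕ => ω' * ‖f‖ ^ (1 / (k : ℝ))) atTop (nhds ω') :=
        tendsto_mul_rpow_one_div ω' hfpos
      have := Filter.liminf_le_liminf (upper hω' hmem) hubdd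
        (hv.isBoundedUnder_le.isCoboundedUnder_ge)
      rw [hv.liminf_eq, hlim'] at this
      linarith
end

section
/- Let ω > 0. A vector f ∈ H belongs to PW_ω(D) if and only if for every g ∈ H the scalar function t ↦ ⟨e^{itD} f, g⟩ is bounded on the real line and extends to an entire function F_g : ℂ → ℂ of exponential type ω, i.e. there is a constant C_g with |F_g(z)| ≤ C_g e^{ω |z|} for all z ∈ ℂ and F_g(t) = ⟨e^{itD} f, g⟩ for all real t. -/
open MeasureTheory Complex Filter
open scoped ENNReal Real

set_option linter.unusedSectionVars false
set_option linter.unusedVariables false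

variable {E : Type*} [NormedAddCommGroup E] [InnerProductSpace ℂ E]
  [CompleteSpace E] [SecondCountableTopology E]

lemma memLp_U (μ : Measure ℝ) (t : ℝ) (f : Lp E 2 μ) :
    MemLp (fun x : ℝ => Complex.exp (Complex.I * t * x) • f x) 2 μ := by
  refine MemLp.of_le (Lp.memLp f) ?_ ?_
  · exact ((Complex.continuous_exp.comp (by fun_prop)).aestronglyMeasurable).smul
      (Lp.aestronglyMeasurable f)
  · filter_upwards with x
    rw [norm_smul]
    simp [Complex.norm_exp]

/-- The unitary (Schrödinger) group `e^{itD}`, acting as `(e^{itD} f)(λ) = e^{itλ} f(λ)`. -/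
noncomputable def Ugrp (μ : Measure ℝ) (t : ℝ) (f : Lp E 2 μ) : Lp E 2 μ :=
  (memLp_U μ t f).toLp _

lemma inner_Ugrp (μ : Measure ℝ) (t : ℝ) (f g : Lp E 2 μ) :
    (inner ℂ (Ugrp μ t f) g : ℂ) =
      ∫ a : ℝ, Complex.exp (-(Complex.I * t * a)) * (inner ℂ (f a) (g a) : ℂ) ∂μ := by
  rw [MeasureTheory.L2.inner_def]
  refine integral_congr_ae ?_
  filter_upwards [(memLp_U μ t f).coeFn_toLp] with a ha
  rw [show ((Ugrp μ t f : Lp E 2 μ) : ℝ → E) a = _ from ha, inner_smul_left]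
  congr 1
  rw [← Complex.exp_conj]
  congr 1
  simp

lemma norm_cexp_neg_I_mul (z : ℂ) (a : ℝ) :
    ‖Complex.exp (-(Complex.I * z * a))‖ = Real.exp (z.im * a) := by
  rw [Complex.norm_exp]
  congr 1
  simp [Complex.mul_re]

lemma im_mul_le {z : ℂ} {R ω a : ℝ} (hzR : ‖z‖ ≤ R) (ha : a ∈ Set.Icc 0 ω) :
    z.im * a ≤ R * |ω| := by
  have h0R : (0:ℝ) ≤ R := (norm_nonneg z).trans hzR
  calc z.im * a ≤ |z.im| * a := mul_le_mul_of_nonneg_right (le_abs_self _) ha.1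
  _ ≤ R * a := mul_le_mul_of_nonneg_right ((Complex.abs_im_le_norm z).trans hzR) ha.1
  _ ≤ R * |ω| := mul_le_mul_of_nonneg_left (ha.2.trans (le_abs_self ω)) h0R

lemma entire_transform (μ : Measure ℝ) (ω : ℝ) (h : ℝ → ℂ)
    (hint : Integrable h μ) (hsupp : ∀ a, a ∉ Set.Icc 0 ω → h a = 0) :
    Differentiable ℂ (fun z : ℂ => ∫ a : ℝ, Complex.exp (-(Complex.I * z * a)) * h a ∂μ) := by
  intro z₀
  set bound : ℝ → ℝ := fun a => (|ω| * Real.exp ((‖z₀‖ + 1) * |ω|)) * ‖h a‖ with hbdef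
  have key := hasDerivAt_integral_of_dominated_loc_of_deriv_le (μ := μ) (𝕜 := ℂ)
    (F := fun z a => Complex.exp (-(Complex.I * z * a)) * h a)
    (F' := fun z a => (-(Complex.I * a)) * (Complex.exp (-(Complex.I * z * a)) * h a))
    (x₀ := z₀) (bound := bound) (Metric.ball_mem_nhds z₀ one_pos) ?_ ?_ ?_ ?_ ?_ ?_
  · exact key.2.differentiableAt
  · filter_upwards with z
    exact ((Complex.continuous_exp.comp (by fun_prop)).aestronglyMeasurable).mul
      hint.aestronglyMeasurable
  · refine hint.norm.const_mul (Real.exp (‖z₀‖ * |ω|)) |>.mono' ?_ ?_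
    · exact ((Complex.continuous_exp.comp (by fun_prop)).aestronglyMeasurable).mul
        hint.aestronglyMeasurable
    · filter_upwards with a
      by_cases ha : a ∈ Set.Icc 0 ω
      · rw [norm_mul, norm_cexp_neg_I_mul]
        exact mul_le_mul_of_nonneg_right
          (Real.exp_le_exp.2 (im_mul_le le_rfl ha)) (norm_nonneg _)
      · simp [hsupp a ha]
  · exact (Continuous.aestronglyMeasurable (by fun_prop)).mul
      (((Complex.continuous_exp.comp (by fun_prop)).aestronglyMeasurable).mul
        hint.aestronglyMeasurable)
  · filter_upwards with a
    intro z hz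
    by_cases ha : a ∈ Set.Icc 0 ω
    · rw [norm_mul, norm_mul, norm_cexp_neg_I_mul, hbdef]
      have haω : |a| ≤ |ω| := by
        rw [abs_le]
        exact ⟨(neg_nonpos.2 (abs_nonneg _)).trans ha.1, ha.2.trans (le_abs_self _)⟩
      have h1 : ‖-(Complex.I * (a:ℂ))‖ ≤ |ω| := by
        simpa [Complex.norm_real] using haω
      have hzn : ‖z‖ ≤ ‖z₀‖ + 1 := by
        have hd := mem_ball_iff_norm.1 hz
        calc ‖z‖ ≤ ‖z₀‖ + ‖z - z₀‖ := by simpa using norm_add_le z₀ (z - z₀)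
        _ ≤ ‖z₀‖ + 1 := by linarith
      have h2 : Real.exp (z.im * a) ≤ Real.exp ((‖z₀‖ + 1) * |ω|) :=
        Real.exp_le_exp.2 (im_mul_le hzn ha)
      calc ‖-(Complex.I * (a:ℂ))‖ * (Real.exp (z.im * a) * ‖h a‖)
          ≤ |ω| * (Real.exp ((‖z₀‖ + 1) * |ω|) * ‖h a‖) :=
            mul_le_mul h1 (mul_le_mul_of_nonneg_right h2 (norm_nonneg _))
              (by positivity) (abs_nonneg _)
          _ = |ω| * Real.exp ((‖z₀‖ + 1) * |ω|) * ‖h a‖ := by ring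
    · simp [hsupp a ha, hbdef]
  · exact hint.norm.const_mul _
  · filter_upwards with a
    intro z hz
    have hda : HasDerivAt (fun w : ℂ => Complex.exp (-(Complex.I * a) * w))
        ((-(Complex.I * a)) * Complex.exp (-(Complex.I * a) * z)) z := by
      simpa [mul_comm] using (((hasDerivAt_id z).const_mul (-(Complex.I * (a:ℂ)))).cexp)
    have h2 : HasDerivAt (fun w : ℂ => Complex.exp (-(Complex.I * w * a)))
        ((-(Complex.I * a)) * Complex.exp (-(Complex.I * z * a))) z := by
      convert hda using 2 <;> ring_nf
    simpa [mul_assoc] using h2.mul_const (h a)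

lemma norm_cexp_I_omega (ω : ℝ) (z : ℂ) :
    ‖Complex.exp (Complex.I * ω * z)‖ = Real.exp (-(ω * z.im)) := by
  rw [Complex.norm_exp]
  congr 1
  simp [Complex.mul_re, Complex.mul_im]

lemma norm_cexp_neg_I_omega (ω : ℝ) (z : ℂ) :
    ‖Complex.exp (-(Complex.I * ω * z))‖ = Real.exp (ω * z.im) := by
  rw [Complex.norm_exp]
  congr 1
  simp [Complex.mul_re, Complex.mul_im]

lemma global_bound (F : ℂ → ℂ) (hF : Differentiable ℂ F) (ω B C : ℝ) (hω : 0 < ω)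
    (hB : ∀ t : ℝ, ‖F t‖ ≤ B) (hC : ∀ z : ℂ, ‖F z‖ ≤ C * Real.exp (ω * ‖z‖)) :
    ∀ z : ℂ, ‖F z‖ ≤ max B C * Real.exp (ω * |z.im|) := by
  intro z
  set M := max B C with hM
  have hC0 : 0 ≤ C := le_trans (norm_nonneg (F 0)) (by simpa using hC 0)
  have hBM : B ≤ M := le_max_left _ _
  have hCM : C ≤ M := le_max_right _ _
  -- the multiplier functions
  have hdiffP : Differentiable ℂ (fun z : ℂ => F z * Complex.exp (Complex.I * ω * z)) :=
    hF.mul (((differentiable_const _).mul differentiable_id).cexp)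
  have hdiffN : Differentiable ℂ (fun z : ℂ => F z * Complex.exp (-(Complex.I * ω * z))) :=
    hF.mul ((((differentiable_const _).mul differentiable_id).neg).cexp)
  -- growth bound factory
  have hbigO : ∀ (Q : Set ℂ) (s : ℝ), (∀ w : ℂ, w ∈ Q → 0 ≤ s * w.im) →
      (fun w : ℂ => F w * Complex.exp (s • Complex.I * ω * w)) =O[Bornology.cobounded ℂ ⊓ 𝓟 Q]
        fun w : ℂ => Real.exp (2 * ω * ‖w‖ ^ (1:ℝ)) := by
    intro Q s hQ
    refine Asymptotics.IsBigO.of_bound C ?_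
    refine Filter.eventually_inf_principal.2 (Eventually.of_forall fun w hw => ?_)
    have h1 : ‖Complex.exp (s • Complex.I * ω * w)‖ ≤ 1 := by
      rw [Complex.norm_exp, Real.exp_le_one_iff]
      have : (s • Complex.I * ↑ω * w).re = ω * (s * -w.im) := by
        simp [Complex.mul_re, Complex.mul_im, Complex.smul_re, Complex.smul_im]
        ring
      rw [this]
      have := hQ w hw
      nlinarith
    rw [norm_mul]
    calc ‖F w‖ * ‖Complex.exp (s • Complex.I * ω * w)‖ ≤ (C * Real.exp (ω * ‖w‖)) * 1 :=
          mul_le_mul (hC w) h1 (norm_nonneg _) (by positivity)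
    _ ≤ C * ‖Real.exp (2 * ω * ‖w‖ ^ (1:ℝ))‖ := by
        rw [mul_one, Real.norm_eq_abs, abs_of_pos (Real.exp_pos _), Real.rpow_one]
        have : Real.exp (ω * ‖w‖) ≤ Real.exp (2 * ω * ‖w‖) := by
          rw [Real.exp_le_exp]
          have : ‖w‖ = ‖w‖ := rfl
          nlinarith [norm_nonneg w, hω.le]
        nlinarith [Real.exp_pos (ω * ‖w‖)]
    _ = C * ‖Real.exp (2 * ω * ‖w‖ ^ (1:ℝ))‖ := rfl
  -- norms of the multipliers
  have hnP : ∀ w : ℂ, ‖F w * Complex.exp (Complex.I * ω * w)‖ = ‖F w‖ * Real.exp (-(ω * w.im)) :=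
    fun w => by rw [norm_mul, norm_cexp_I_omega]
  have hnN : ∀ w : ℂ, ‖F w * Complex.exp (-(Complex.I * ω * w))‖
      = ‖F w‖ * Real.exp (ω * w.im) := fun w => by rw [norm_mul, norm_cexp_neg_I_omega]
  have hre_bd : ∀ x : ℝ, ‖F x‖ * Real.exp (-(ω * (x:ℂ).im)) ≤ M := by
    intro x
    simp only [Complex.ofReal_im, mul_zero, neg_zero, Real.exp_zero, mul_one]
    exact (hB x).trans hBM
  have hre_bd' : ∀ x : ℝ, ‖F x‖ * Real.exp (ω * (x:ℂ).im) ≤ M := by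
    intro x
    simp only [Complex.ofReal_im, mul_zero, Real.exp_zero, mul_one]
    exact (hB x).trans hBM
  have hnormI : ∀ x : ℝ, ‖((x:ℂ) * Complex.I)‖ = |x| := by
    intro x
    rw [norm_mul, Complex.norm_I, Complex.norm_real, mul_one, Real.norm_eq_abs]
  have himP : ∀ x : ℝ, 0 ≤ x → ‖F ((x:ℂ) * Complex.I)‖ * Real.exp (-(ω * ((x:ℂ) * Complex.I).im)) ≤ M := by
    intro x hx
    have h1 : ((x:ℂ) * Complex.I).im = x := by simp
    rw [h1]
    calc ‖F ((x:ℂ) * Complex.I)‖ * Real.exp (-(ω * x))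
        ≤ (C * Real.exp (ω * ‖(x:ℂ) * Complex.I‖)) * Real.exp (-(ω * x)) :=
          mul_le_mul_of_nonneg_right (hC _) (Real.exp_pos _).le
      _ = C := by
          rw [hnormI, _root_.abs_of_nonneg hx, mul_assoc, ← Real.exp_add,
            show ω * x + -(ω * x) = 0 by ring, Real.exp_zero, mul_one]
      _ ≤ M := hCM
  have himN : ∀ x : ℝ, x ≤ 0 → ‖F ((x:ℂ) * Complex.I)‖ * Real.exp (ω * ((x:ℂ) * Complex.I).im) ≤ M := by
    intro x hx
    have h1 : ((x:ℂ) * Complex.I).im = x := by simp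
    rw [h1]
    calc ‖F ((x:ℂ) * Complex.I)‖ * Real.exp (ω * x)
        ≤ (C * Real.exp (ω * ‖(x:ℂ) * Complex.I‖)) * Real.exp (ω * x) :=
          mul_le_mul_of_nonneg_right (hC _) (Real.exp_pos _).le
      _ = C := by
          rw [hnormI, _root_.abs_of_nonpos hx, mul_assoc, ← Real.exp_add,
            show ω * -x + ω * x = 0 by ring, Real.exp_zero, mul_one]
      _ ≤ M := hCM
  -- finish from a bound on the multiplied function
  have finishP : z.im ≥ 0 → ‖F z * Complex.exp (Complex.I * ω * z)‖ ≤ M →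
      ‖F z‖ ≤ M * Real.exp (ω * |z.im|) := by
    intro him hle
    rw [hnP] at hle
    rw [_root_.abs_of_nonneg him]
    have := mul_le_mul_of_nonneg_right hle (Real.exp_pos (ω * z.im)).le
    rwa [mul_assoc, ← Real.exp_add, neg_add_cancel, Real.exp_zero, mul_one] at this
  have finishN : z.im ≤ 0 → ‖F z * Complex.exp (-(Complex.I * ω * z))‖ ≤ M →
      ‖F z‖ ≤ M * Real.exp (ω * |z.im|) := by
    intro him hle
    rw [hnN] at hle
    rw [_root_.abs_of_nonpos him]
    have := mul_le_mul_of_nonneg_right hle (Real.exp_pos (ω * -z.im)).le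
    rwa [mul_assoc, ← Real.exp_add, ← mul_add, add_neg_cancel, mul_zero, Real.exp_zero,
      mul_one] at this
  rcases le_or_gt 0 z.im with him | him
  · -- upper half plane : multiplier exp(I ω z)
    have hO : ∀ Q : Set ℂ, (∀ w : ℂ, w ∈ Q → 0 ≤ w.im) →
        (fun w : ℂ => F w * Complex.exp (Complex.I * ω * w)) =O[Bornology.cobounded ℂ ⊓ 𝓟 Q]
          fun w : ℂ => Real.exp (2 * ω * ‖w‖ ^ (1:ℝ)) := by
      intro Q hQ
      have := hbigO Q 1 (fun w hw => by simpa using hQ w hw)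
      simpa using this
    rcases le_or_gt 0 z.re with hre | hre
    · refine finishP him (PhragmenLindelof.quadrant_I (f := fun w => F w * Complex.exp (Complex.I * ω * w)) (z := z) hdiffP.diffContOnCl
        ⟨1, one_lt_two, 2 * ω, hO _ ?_⟩ (fun x _ => by rw [hnP]; exact hre_bd x)
        (fun x hx => by rw [hnP]; exact himP x hx) hre him)
      intro w hw
      exact (le_of_lt (Complex.mem_reProdIm.1 hw).2)
    · refine finishP him (PhragmenLindelof.quadrant_II (f := fun w => F w * Complex.exp (Complex.I * ω * w)) (z := z) hdiffP.diffContOnCl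
        ⟨1, one_lt_two, 2 * ω, hO _ ?_⟩ (fun x _ => by rw [hnP]; exact hre_bd x)
        (fun x hx => by rw [hnP]; exact himP x hx) hre.le him)
      intro w hw
      exact (le_of_lt (Complex.mem_reProdIm.1 hw).2)
  · -- lower half plane : multiplier exp(-(I ω z))
    have hO : ∀ Q : Set ℂ, (∀ w : ℂ, w ∈ Q → w.im ≤ 0) →
        (fun w : ℂ => F w * Complex.exp (-(Complex.I * ω * w))) =O[Bornology.cobounded ℂ ⊓ 𝓟 Q]
          fun w : ℂ => Real.exp (2 * ω * ‖w‖ ^ (1:ℝ)) := by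
      intro Q hQ
      have := hbigO Q (-1) (fun w hw => by
        have := hQ w hw
        nlinarith)
      refine this.congr' ?_ (Eventually.of_forall fun w => rfl)
      refine Eventually.of_forall fun w => ?_
      norm_num
    rcases le_or_gt 0 z.re with hre | hre
    · refine finishN him.le (PhragmenLindelof.quadrant_IV (f := fun w => F w * Complex.exp (-(Complex.I * ω * w))) (z := z) hdiffN.diffContOnCl
        ⟨1, one_lt_two, 2 * ω, hO _ ?_⟩ (fun x _ => by rw [hnN]; exact hre_bd' x)
        (fun x hx => by rw [hnN]; exact himN x hx) hre him.le)
      intro w hw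
      exact (le_of_lt (Complex.mem_reProdIm.1 hw).2)
    · refine finishN him.le (PhragmenLindelof.quadrant_III (f := fun w => F w * Complex.exp (-(Complex.I * ω * w))) (z := z) hdiffN.diffContOnCl
        ⟨1, one_lt_two, 2 * ω, hO _ ?_⟩ (fun x _ => by rw [hnN]; exact hre_bd' x)
        (fun x hx => by rw [hnN]; exact himN x hx) hre.le him.le)
      intro w hw
      exact (le_of_lt (Complex.mem_reProdIm.1 hw).2)

lemma norm_cexp_quad (ε t y : ℝ) :
    ‖Complex.exp (-(ε:ℂ) * ((t:ℂ) + y * Complex.I)^2)‖ = Real.exp (-(ε*(t^2-y^2))) := by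
  rw [Complex.norm_exp]
  congr 1
  have h1 : (((t:ℂ) + y * Complex.I)^2).re = t^2 - y^2 := by
    simp [sq, Complex.mul_re]
  have h2 : (-(ε:ℂ) * ((t:ℂ) + y * Complex.I)^2).re
      = -ε * (((t:ℂ) + y * Complex.I)^2).re := by
    simp [Complex.mul_re]
  rw [h2, h1]
  ring

lemma norm_cexp_quad' (ε t : ℝ) :
    ‖Complex.exp (-(ε:ℂ) * (t:ℂ)^2)‖ = Real.exp (-(ε*t^2)) := by
  have := norm_cexp_quad ε t 0
  simpa using this

lemma shift_line (g : ℂ → ℂ) (hg : Differentiable ℂ g) (R K ε : ℝ) (hε : 0 < ε) (hR : 0 ≤ R)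
    (hb : ∀ (t y : ℝ), y ∈ Set.Icc 0 R → ‖g (t + y * Complex.I)‖ ≤ K * Real.exp (-ε * t ^ 2)) :
    ∫ t : ℝ, g (t + R * Complex.I) = ∫ t : ℝ, g t := by
  have hgz : ∀ t : ℝ, g ((t:ℂ) + (0:ℝ) * Complex.I) = g t := by
    intro t; norm_num
  have hb0 : ∀ t : ℝ, ‖g t‖ ≤ K * Real.exp (-ε * t ^ 2) := by
    intro t
    have := hb t 0 ⟨le_rfl, hR⟩
    rwa [hgz t] at this
  have hbR : ∀ t : ℝ, ‖g ((t:ℂ) + R * Complex.I)‖ ≤ K * Real.exp (-ε * t ^ 2) := fun t =>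
    hb t R ⟨hR, le_rfl⟩
  have hmeas0 : AEStronglyMeasurable (fun t : ℝ => g t) volume :=
    (hg.continuous.comp (by fun_prop)).aestronglyMeasurable
  have hmeasR : AEStronglyMeasurable (fun t : ℝ => g ((t:ℂ) + R * Complex.I)) volume :=
    (hg.continuous.comp (by fun_prop)).aestronglyMeasurable
  have hKint : Integrable (fun t : ℝ => K * Real.exp (-ε * t ^ 2)) volume :=
    (integrable_exp_neg_mul_sq hε).const_mul K
  have int0 : Integrable (fun t : ℝ => g t) volume :=
    hKint.mono' hmeas0 (Eventually.of_forall hb0)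
  have intR : Integrable (fun t : ℝ => g ((t:ℂ) + R * Complex.I)) volume :=
    hKint.mono' hmeasR (Eventually.of_forall hbR)
  -- rectangle identity
  have C : ∀ T : ℝ,
      ((∫ x : ℝ in (-T)..T, g x) - ∫ x : ℝ in (-T)..T, g ((x:ℂ) + R * Complex.I)) +
        Complex.I • (∫ y : ℝ in (0:ℝ)..R, g ((T:ℂ) + y * Complex.I)) -
        Complex.I • (∫ y : ℝ in (0:ℝ)..R, g ((-T:ℂ) + y * Complex.I)) = 0 := by
    intro T
    have := Complex.integral_boundary_rect_eq_zero_of_differentiableOn g (((-T : ℝ)):ℂ)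
      ((T:ℂ) + R * Complex.I) hg.differentiableOn
    simpa only [Complex.add_re, Complex.add_im, Complex.ofReal_re, Complex.ofReal_im,
      Complex.mul_re, Complex.mul_im, Complex.I_re, Complex.I_im, Complex.ofReal_neg,
      Complex.neg_re, Complex.neg_im, mul_zero, mul_one, zero_mul, sub_zero, zero_add, add_zero,
      zero_sub, neg_zero, Complex.ofReal_zero, hgz] using this
  -- vertical integrals bound
  have hv : ∀ s : ℝ, ‖∫ y : ℝ in (0:ℝ)..R, g ((s:ℂ) + y * Complex.I)‖ ≤
      K * Real.exp (-ε * s ^ 2) * |R - 0| := by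
    intro s
    refine intervalIntegral.norm_integral_le_of_norm_le_const ?_
    intro y hy
    rw [Set.uIoc_of_le hR] at hy
    exact hb s y ⟨hy.1.le, hy.2⟩
  have hexp0 : Tendsto (fun T : ℝ => K * Real.exp (-ε * T ^ 2) * |R - 0|) atTop (nhds 0) := by
    have h1 : Tendsto (fun T : ℝ => ε * T ^ 2) atTop atTop :=
      (tendsto_const_mul_atTop_of_pos hε).2 (tendsto_pow_atTop (two_ne_zero))
    have h2 : Tendsto (fun T : ℝ => Real.exp (-ε * T ^ 2)) atTop (nhds 0) := by
      simp_rw [neg_mul]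
      exact Real.tendsto_exp_atBot.comp (tendsto_neg_atBot_iff.2 h1)
    have := (h2.const_mul K).mul_const |R - 0|
    simpa using this
  have hvertT : Tendsto (fun T : ℝ => ∫ y : ℝ in (0:ℝ)..R, g ((T:ℂ) + y * Complex.I))
      atTop (nhds 0) := by
    rw [tendsto_zero_iff_norm_tendsto_zero]
    exact tendsto_of_tendsto_of_tendsto_of_le_of_le' tendsto_const_nhds hexp0
      (Eventually.of_forall fun T => norm_nonneg _) (Eventually.of_forall fun T => hv T)
  have hvertN : Tendsto (fun T : ℝ => ∫ y : ℝ in (0:ℝ)..R, g ((-T:ℂ) + y * Complex.I))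
      atTop (nhds 0) := by
    rw [tendsto_zero_iff_norm_tendsto_zero]
    refine tendsto_of_tendsto_of_tendsto_of_le_of_le' tendsto_const_nhds hexp0
      (Eventually.of_forall fun T => norm_nonneg _) (Eventually.of_forall fun T => ?_)
    have := hv (-T)
    rw [show ((-T : ℝ):ℂ) = ((-T : ℂ)) by push_cast; ring] at this
    simpa using this
  have key : ∀ T : ℝ, (∫ x : ℝ in (-T)..T, g ((x:ℂ) + R * Complex.I)) =
      (∫ x : ℝ in (-T)..T, g x) +
        Complex.I * (∫ y : ℝ in (0:ℝ)..R, g ((T:ℂ) + y * Complex.I)) -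
        Complex.I * (∫ y : ℝ in (0:ℝ)..R, g ((-T:ℂ) + y * Complex.I)) := by
    intro T
    have hC := C T
    simp only [smul_eq_mul] at hC
    linear_combination -hC
  have t1 : Tendsto (fun T : ℝ => ∫ x : ℝ in (-T)..T, g ((x:ℂ) + R * Complex.I)) atTop
      (nhds (∫ t : ℝ, g ((t:ℂ) + R * Complex.I))) :=
    intervalIntegral_tendsto_integral intR tendsto_neg_atTop_atBot tendsto_id
  have t2 : Tendsto (fun T : ℝ => (∫ x : ℝ in (-T)..T, g x) +
      Complex.I * (∫ y : ℝ in (0:ℝ)..R, g ((T:ℂ) + y * Complex.I)) -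
      Complex.I * (∫ y : ℝ in (0:ℝ)..R, g ((-T:ℂ) + y * Complex.I))) atTop
      (nhds (∫ t : ℝ, g t)) := by
    have := ((intervalIntegral_tendsto_integral int0 tendsto_neg_atTop_atBot tendsto_id).add
      (hvertT.const_mul Complex.I)).sub (hvertN.const_mul Complex.I)
    simpa using this
  exact tendsto_nhds_unique t1 (t2.congr fun T => (key T).symm)

lemma key_estimate (μ : Measure ℝ) [SigmaFinite μ]
    (ω : ℝ) (hω : 0 < ω) (F : ℂ → ℂ) (hFdiff : Differentiable ℂ F)
    (M : ℝ) (hM0 : 0 ≤ M) (hM : ∀ z : ℂ, ‖F z‖ ≤ M * Real.exp (ω * |z.im|))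
    (wC : ℝ → ℂ) (w : ℝ → ℝ) (hw : ∀ a, wC a = ((w a : ℝ) : ℂ)) (hw0 : ∀ a, 0 ≤ w a)
    (hintwC : Integrable wC μ) (hwmeas : StronglyMeasurable wC)
    (hFt : ∀ t : ℝ, F t = ∫ a : ℝ, Complex.exp (-(Complex.I * t * a)) * wC a ∂μ)
    (lam ε : ℝ) (hlam : ω < lam) (hε : 0 < ε) :
    (∫ a : ℝ, Real.exp (-(lam - a)^2 / (4*ε)) * w a ∂μ) ≤
      M * Real.exp (-(lam - ω)^2 / (4*ε)) := by
  classical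
  set g0 : ℂ → ℂ := fun z =>
    F z * Complex.exp (Complex.I * lam * z) * Complex.exp (-(ε:ℂ) * z^2) with hg0def
  have hg0diff : Differentiable ℂ g0 := by
    rw [hg0def]
    fun_prop
  set S : ℝ := Real.sqrt (π / ε) with hSdef
  have hS0 : 0 < S := Real.sqrt_pos.2 (by positivity)
  set IR : ℝ := ∫ a : ℝ, Real.exp (-(lam - a)^2 / (4*ε)) * w a ∂μ with hIRdef
  have hIR0 : 0 ≤ IR :=
    integral_nonneg fun a => mul_nonneg (Real.exp_pos _).le (hw0 a)
  -- norm of g0 on horizontal lines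
  have hnorm_g0 : ∀ t y : ℝ, ‖g0 ((t:ℂ) + y * Complex.I)‖ =
      ‖F ((t:ℂ) + y * Complex.I)‖ * Real.exp (-(lam * y)) * Real.exp (-(ε*(t^2-y^2))) := by
    intro t y
    have him : ((t:ℂ) + y * Complex.I).im = y := by simp
    rw [hg0def]
    simp only [norm_mul]
    rw [norm_cexp_I_omega, norm_cexp_quad, him]
  -- pointwise bound on strip 0 ≤ y ≤ R
  have hstrip : ∀ (R t y : ℝ), 0 ≤ y → y ≤ R →
      ‖g0 ((t:ℂ) + y * Complex.I)‖ ≤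
        (M * Real.exp ((ω - lam) * y + ε * R^2)) * Real.exp (-ε * t^2) := by
    intro R t y hy0 hyR
    rw [hnorm_g0]
    have him : ((t:ℂ) + y * Complex.I).im = y := by simp
    have h1 : ‖F ((t:ℂ) + y * Complex.I)‖ ≤ M * Real.exp (ω * y) := by
      have := hM ((t:ℂ) + y * Complex.I)
      rwa [him, _root_.abs_of_nonneg hy0] at this
    calc ‖F ((t:ℂ) + y * Complex.I)‖ * Real.exp (-(lam * y)) * Real.exp (-(ε*(t^2-y^2)))
        ≤ (M * Real.exp (ω * y)) * Real.exp (-(lam * y)) * Real.exp (-(ε*(t^2-y^2))) := by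
          gcongr
      _ = M * Real.exp (ω * y + -(lam * y) + -(ε*(t^2-y^2))) := by
          rw [mul_assoc M, ← Real.exp_add, mul_assoc M, ← Real.exp_add]
      _ ≤ M * Real.exp (((ω - lam) * y + ε * R^2) + -ε * t^2) := by
          refine mul_le_mul_of_nonneg_left (Real.exp_le_exp.2 ?_) hM0
          nlinarith [mul_nonneg (sub_nonneg.2 hyR) (by linarith : (0:ℝ) ≤ R + y)]
      _ = (M * Real.exp ((ω - lam) * y + ε * R^2)) * Real.exp (-ε * t^2) := by
          rw [mul_assoc M, ← Real.exp_add]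
  -- Part 2 : contour shift bound
  set R : ℝ := (lam - ω) / (2*ε) with hRdef
  have hR0 : 0 ≤ R := div_nonneg (by linarith) (by linarith)
  have hshift : ∫ t : ℝ, g0 ((t:ℂ) + R * Complex.I) = ∫ t : ℝ, g0 t := by
    refine shift_line g0 hg0diff R (M * Real.exp (ε * R^2)) ε hε hR0 ?_
    intro t y hy
    refine le_trans (hstrip R t y hy.1 hy.2) ?_
    refine mul_le_mul_of_nonneg_right ?_ (Real.exp_pos _).le
    refine mul_le_mul_of_nonneg_left (Real.exp_le_exp.2 ?_) hM0
    nlinarith [mul_nonneg (by linarith : (0:ℝ) ≤ lam - ω) hy.1]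
  have hnormle : ‖∫ t : ℝ, g0 t‖ ≤
      (M * Real.exp ((ω - lam) * R + ε * R^2)) * Real.sqrt (π/ε) := by
    rw [← hshift]
    calc ‖∫ t : ℝ, g0 ((t:ℂ) + R * Complex.I)‖
        ≤ ∫ t : ℝ, (M * Real.exp ((ω - lam) * R + ε * R^2)) * Real.exp (-ε * t^2) :=
          norm_integral_le_of_norm_le ((integrable_exp_neg_mul_sq hε).const_mul _)
            (Eventually.of_forall fun t => hstrip R t R hR0 le_rfl)
      _ = (M * Real.exp ((ω - lam) * R + ε * R^2)) * Real.sqrt (π/ε) := by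
          rw [integral_const_mul, integral_gaussian]
  -- Part 1 : Fubini and the Gaussian integral
  set Φ : ℝ → ℝ → ℂ := fun t a =>
    (Complex.exp (Complex.I * lam * t) * Complex.exp (-(ε:ℂ) * (t:ℂ)^2)) *
      (Complex.exp (-(Complex.I * t * a)) * wC a) with hPhidef
  have hnormPhi : ∀ (t a : ℝ), ‖Φ t a‖ = Real.exp (-ε * t^2) * ‖wC a‖ := by
    intro t a
    rw [hPhidef]
    simp only [norm_mul]
    rw [norm_cexp_I_omega, norm_cexp_quad', norm_cexp_neg_I_mul]
    simp only [Complex.ofReal_im, mul_zero, zero_mul, neg_zero, Real.exp_zero, one_mul]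
    ring_nf
  have hprodint : Integrable (fun p : ℝ × ℝ => Φ p.1 p.2) (volume.prod μ) := by
    refine Integrable.mono' ((integrable_exp_neg_mul_sq hε).mul_prod hintwC.norm) ?_ ?_
    · refine AEStronglyMeasurable.mul (Continuous.aestronglyMeasurable (by fun_prop)) ?_
      exact AEStronglyMeasurable.mul (Continuous.aestronglyMeasurable (by fun_prop))
        ((hwmeas.comp_measurable measurable_snd).aestronglyMeasurable)
    · filter_upwards with p
      exact le_of_eq (hnormPhi p.1 p.2)
  have hg0t : ∀ t : ℝ, g0 t = ∫ a : ℝ, Φ t a ∂μ := by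
    intro t
    have hunfold : g0 (t:ℂ) = F t * Complex.exp (Complex.I * lam * t) *
        Complex.exp (-(ε:ℂ) * (t:ℂ)^2) := rfl
    rw [hunfold, hFt t]
    calc (∫ a : ℝ, Complex.exp (-(Complex.I * t * a)) * wC a ∂μ) *
          Complex.exp (Complex.I * lam * t) * Complex.exp (-(ε:ℂ) * (t:ℂ)^2)
        = (Complex.exp (Complex.I * lam * t) * Complex.exp (-(ε:ℂ) * (t:ℂ)^2)) *
          ∫ a : ℝ, Complex.exp (-(Complex.I * t * a)) * wC a ∂μ := by ring
      _ = ∫ a : ℝ, Φ t a ∂μ := (integral_const_mul _ _).symm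
  have hswap : ∫ t : ℝ, g0 t = ∫ a : ℝ, (∫ t : ℝ, Φ t a) ∂μ := by
    rw [integral_congr_ae (Eventually.of_forall hg0t)]
    exact integral_integral_swap hprodint
  have hinner : ∀ a : ℝ, (∫ t : ℝ, Φ t a) =
      (S:ℂ) * ((Real.exp (-(lam - a)^2 / (4*ε)) * w a : ℝ) : ℂ) := by
    intro a
    have h1 : ∀ t : ℝ, Φ t a =
        (Complex.exp (Complex.I * ((lam - a : ℝ):ℂ) * t) *
          Complex.exp (-(ε:ℂ) * (t:ℂ)^2)) * wC a := by
      intro t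
      rw [hPhidef]
      rw [show Complex.I * ((lam - a:ℝ):ℂ) * (t:ℂ)
          = Complex.I * lam * t + -(Complex.I * t * a) by push_cast; ring]
      rw [Complex.exp_add]
      ring
    rw [integral_congr_ae (Eventually.of_forall h1), integral_mul_const,
      fourierIntegral_gaussian (by simpa using hε) ((lam - a : ℝ):ℂ), hw a]
    have hS : ((π:ℝ) / (ε:ℂ)) ^ (1/2 : ℂ) = (S:ℂ) := by
      rw [show ((π:ℝ) / (ε:ℂ) : ℂ) = ((π/ε : ℝ):ℂ) by push_cast; ring,
        show (1/2 : ℂ) = ((1/2 : ℝ) : ℂ) by norm_num,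
        ← Complex.ofReal_cpow (by positivity), hSdef, Real.sqrt_eq_rpow]
    rw [hS, mul_assoc]
    congr 1
    rw [show (-(((lam - a:ℝ):ℂ))^2/(4*(ε:ℂ))) = ((-(lam - a)^2/(4*ε) : ℝ) : ℂ) by
      push_cast; ring]
    rw [← Complex.ofReal_exp]
    push_cast
    ring
  have hA : ∫ t : ℝ, g0 t = (S:ℂ) * (IR : ℂ) := by
    rw [hswap, integral_congr_ae (Eventually.of_forall hinner), integral_const_mul]
    congr 1
    exact integral_ofReal
  -- combine
  rw [hA, norm_mul, Complex.norm_real, Complex.norm_real, Real.norm_eq_abs,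
    Real.norm_eq_abs, _root_.abs_of_pos hS0, _root_.abs_of_nonneg hIR0] at hnormle
  have hexp_eq : (ω - lam) * R + ε * R^2 = -(lam - ω)^2/(4*ε) := by
    rw [hRdef]
    field_simp
    ring
  rw [hexp_eq] at hnormle
  rw [mul_comm S IR] at hnormle
  calc IR ≤ M * Real.exp (-(lam - ω)^2/(4*ε)) :=
        le_of_mul_le_mul_right (by rw [hSdef] at hnormle ⊢; exact hnormle) hS0
    _ = M * Real.exp (-(lam - ω)^2 / (4*ε)) := by ring_nf

/-- Let `ω > 0`. A vector `f ∈ H` belongs to `PW_ω(D)` if and only if for every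
`g ∈ H` the scalar function `t ↦ ⟨e^{itD} f, g⟩` is bounded on the real line and extends to an
entire function `F_g : ℂ → ℂ` of exponential type `ω`. -/
theorem mem_PW_iff_entire_matrix_coefficients
    (μ : Measure ℝ) [SigmaFinite μ] (hμ : μ (Set.Iio 0) = 0)
    (ω : ℝ) (hω : 0 < ω) (f : Lp E 2 μ) :
    f ∈ PW (E := E) μ ω ↔
      ∀ g : Lp E 2 μ,
        (∃ B : ℝ, ∀ t : ℝ, ‖(inner ℂ (Ugrp μ t f) g : ℂ)‖ ≤ B) ∧
        ∃ F : ℂ → ℂ, Differentiable ℂ F ∧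
          (∃ C : ℝ, ∀ z : ℂ, ‖F z‖ ≤ C * Real.exp (ω * ‖z‖)) ∧
          ∀ t : ℝ, F t = (inner ℂ (Ugrp μ t f) g : ℂ) := by
  have hae0 : ∀ᵐ a ∂μ, (0:ℝ) ≤ a := by
    rw [ae_iff]
    convert hμ using 2
    ext a
    simp
  constructor
  · intro hfPW g
    set h : ℝ → ℂ := fun a => (inner ℂ (f a) (g a) : ℂ) with hdef
    set hh : ℝ → ℂ := Set.indicator (Set.Icc 0 ω) h with hhdef
    have hinth : Integrable h μ := MeasureTheory.L2.integrable_inner (𝕜 := ℂ) f g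
    have hinthh : Integrable hh μ := hinth.indicator measurableSet_Icc
    set Fz : ℂ → ℂ := fun z => ∫ a : ℝ, Complex.exp (-(Complex.I * z * a)) * hh a ∂μ with hFzdef
    have hcong : ∀ t : ℝ, (inner ℂ (Ugrp μ t f) g : ℂ) = Fz t := by
      intro t
      rw [inner_Ugrp, hFzdef]
      refine integral_congr_ae ?_
      filter_upwards [hfPW, hae0] with a hfa ha0
      by_cases hmem : a ∈ Set.Icc 0 ω
      · rw [hhdef, Set.indicator_of_mem hmem]
      · rw [hhdef, Set.indicator_of_notMem hmem]
        have hgt : ω < a := by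
          by_contra hcon
          exact hmem ⟨ha0, le_of_not_gt hcon⟩
        rw [hfa hgt]
        simp
    have hFbound : ∀ z : ℂ, ‖Fz z‖ ≤ (∫ a : ℝ, ‖hh a‖ ∂μ) * Real.exp (ω * ‖z‖) := by
      intro z
      have h1 : ‖Fz z‖ ≤ ∫ a : ℝ, Real.exp (ω * ‖z‖) * ‖hh a‖ ∂μ := by
        refine norm_integral_le_of_norm_le (hinthh.norm.const_mul _) ?_
        filter_upwards with a
        by_cases hmem : a ∈ Set.Icc 0 ω
        · rw [norm_mul, norm_cexp_neg_I_mul]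
          refine mul_le_mul_of_nonneg_right ?_ (norm_nonneg _)
          refine Real.exp_le_exp.2 ?_
          have h2 := im_mul_le (le_refl ‖z‖) hmem
          rw [_root_.abs_of_pos hω] at h2
          rw [mul_comm ω ‖z‖]
          exact h2
        · rw [hhdef]
          simp [Set.indicator_of_notMem hmem]
      rw [integral_const_mul] at h1
      rw [mul_comm]
      exact h1
    have hFreal : ∀ t : ℝ, ‖Fz t‖ ≤ ∫ a : ℝ, ‖hh a‖ ∂μ := by
      intro t
      have h1 : ‖Fz t‖ ≤ ∫ a : ℝ, ‖hh a‖ ∂μ := by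
        refine norm_integral_le_of_norm_le hinthh.norm ?_
        filter_upwards with a
        rw [norm_mul, norm_cexp_neg_I_mul]
        simp
      exact h1
    refine ⟨⟨∫ a : ℝ, ‖hh a‖ ∂μ, fun t => ?_⟩, Fz,
      entire_transform μ ω hh hinthh (fun a ha => Set.indicator_of_notMem ha h),
      ⟨∫ a : ℝ, ‖hh a‖ ∂μ, hFbound⟩, fun t => (hcong t).symm⟩
    rw [hcong t]
    exact hFreal t
  · intro H
    have hmemg : MemLp ((Set.Ioi ω).indicator (fun a => f a)) 2 μ :=
      (Lp.memLp f).indicator measurableSet_Ioi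
    set g : Lp E 2 μ := hmemg.toLp _ with hgdef
    obtain ⟨⟨B, hB⟩, F, hFdiff, ⟨C, hC⟩, hFt⟩ := H g
    set wC : ℝ → ℂ := (Set.Ioi ω).indicator (fun a => (inner ℂ (f a) (f a) : ℂ)) with hwCdef
    set w : ℝ → ℝ := (Set.Ioi ω).indicator (fun a => ‖f a‖^2) with hwdef
    have hw : ∀ a : ℝ, wC a = ((w a : ℝ) : ℂ) := by
      intro a
      by_cases hmem : a ∈ Set.Ioi ω
      · rw [hwCdef, hwdef, Set.indicator_of_mem hmem, Set.indicator_of_mem hmem,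
          inner_self_eq_norm_sq_to_K]
        norm_cast
      · rw [hwCdef, hwdef, Set.indicator_of_notMem hmem, Set.indicator_of_notMem hmem]
        simp
    have hw0 : ∀ a : ℝ, 0 ≤ w a := by
      intro a
      rw [hwdef]
      exact Set.indicator_nonneg (fun x _ => sq_nonneg _) a
    have hintwC : Integrable wC μ :=
      (MeasureTheory.L2.integrable_inner (𝕜 := ℂ) f f).indicator measurableSet_Ioi
    have hwmeas : StronglyMeasurable wC :=
      ((Lp.stronglyMeasurable f).inner (Lp.stronglyMeasurable f)).indicator measurableSet_Ioi
    have hintw : Integrable w μ := by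
      have heq : w = fun a => ‖wC a‖ := by
        funext a
        rw [hw a, Complex.norm_real, Real.norm_eq_abs, _root_.abs_of_nonneg (hw0 a)]
      rw [heq]
      exact hintwC.norm
    have hFt' : ∀ t : ℝ, F t = ∫ a : ℝ, Complex.exp (-(Complex.I * t * a)) * wC a ∂μ := by
      intro t
      rw [hFt t, inner_Ugrp]
      refine integral_congr_ae ?_
      filter_upwards [hmemg.coeFn_toLp] with a hga
      congr 1
      rw [show ((g : Lp E 2 μ) : ℝ → E) a = _ from hga]
      by_cases hmem : a ∈ Set.Ioi ω
      · rw [hwCdef, Set.indicator_of_mem hmem, Set.indicator_of_mem hmem]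
      · rw [hwCdef, Set.indicator_of_notMem hmem, Set.indicator_of_notMem hmem,
          inner_zero_right]
    set M : ℝ := max B C with hMdef
    have hM0 : 0 ≤ M :=
      le_trans (norm_nonneg (inner ℂ (Ugrp μ 0 f) g : ℂ)) ((hB 0).trans (le_max_left _ _))
    have hBF : ∀ t : ℝ, ‖F t‖ ≤ B := fun t => by rw [hFt t]; exact hB t
    have hMg : ∀ z : ℂ, ‖F z‖ ≤ M * Real.exp (ω * |z.im|) :=
      global_bound F hFdiff ω B C hω hBF hC
    -- the key localization
    have hkey : ∀ lam : ℝ, ω < lam →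
        ∫ a in Set.Ioo (lam - (lam - ω)/2) (lam + (lam - ω)/2), w a ∂μ = 0 := by
      intro lam hlam
      set η : ℝ := (lam - ω)/2 with hηdef
      set A : Set ℝ := Set.Ioo (lam - η) (lam + η) with hAdef
      have hA_nonneg : 0 ≤ ∫ a in A, w a ∂μ :=
        setIntegral_nonneg measurableSet_Ioo fun a _ => hw0 a
      have hbound : ∀ n : ℕ, ∫ a in A, w a ∂μ ≤
          M * Real.exp (-(3*(lam - ω)^2/16) * (n+1)) := by
        intro n
        set ε : ℝ := 1/((n:ℝ)+1) with hεdef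
        have hε : 0 < ε := by positivity
        have hk := key_estimate μ ω hω F hFdiff M hM0 hMg wC w hw hw0 hintwC hwmeas hFt'
          lam ε hlam hε
        have hexpw : Integrable (fun a : ℝ => Real.exp (-(lam - a)^2/(4*ε)) * w a) μ := by
          refine hintw.mono' ?_ ?_
          · exact (Continuous.aestronglyMeasurable (by fun_prop)).mul
              hintw.aestronglyMeasurable
          · filter_upwards with a
            rw [Real.norm_eq_abs, abs_mul, _root_.abs_of_pos (Real.exp_pos _),
              _root_.abs_of_nonneg (hw0 a)]
            refine mul_le_of_le_one_left (hw0 a) ?_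
            rw [Real.exp_le_one_iff]
            have hnum : (0:ℝ) ≤ (lam - a)^2 := sq_nonneg _
            have : (0:ℝ) < 4*ε := by linarith
            exact div_nonpos_of_nonpos_of_nonneg (neg_nonpos.2 hnum) (le_of_lt this)
        have hstep1 : ∫ a in A, w a ∂μ ≤
            ∫ a in A, Real.exp (η^2/(4*ε)) * (Real.exp (-(lam - a)^2/(4*ε)) * w a) ∂μ := by
          refine setIntegral_mono_on hintw.integrableOn
            ((hexpw.const_mul _).integrableOn) measurableSet_Ioo ?_
          intro a ha
          have h2 : (lam - a)^2 ≤ η^2 := by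
            have h3 := ha.1
            have h4 := ha.2
            rw [hAdef] at ha
            nlinarith [ha.1, ha.2]
          have h5 : (1:ℝ) ≤ Real.exp (η^2/(4*ε)) * Real.exp (-(lam - a)^2/(4*ε)) := by
            rw [← Real.exp_add, show (1:ℝ) = Real.exp 0 by simp, Real.exp_le_exp]
            have : (0:ℝ) < 4*ε := by linarith
            rw [← add_div]
            exact div_nonneg (by linarith) (by linarith)
          calc w a = 1 * w a := (one_mul _).symm
            _ ≤ (Real.exp (η^2/(4*ε)) * Real.exp (-(lam - a)^2/(4*ε))) * w a :=
                mul_le_mul_of_nonneg_right h5 (hw0 a)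
            _ = Real.exp (η^2/(4*ε)) * (Real.exp (-(lam - a)^2/(4*ε)) * w a) := by ring
        have hstep2 : ∫ a in A, Real.exp (η^2/(4*ε)) *
            (Real.exp (-(lam - a)^2/(4*ε)) * w a) ∂μ =
            Real.exp (η^2/(4*ε)) * ∫ a in A, Real.exp (-(lam - a)^2/(4*ε)) * w a ∂μ :=
          integral_const_mul _ _
        have hstep3 : ∫ a in A, Real.exp (-(lam - a)^2/(4*ε)) * w a ∂μ ≤
            ∫ a : ℝ, Real.exp (-(lam - a)^2/(4*ε)) * w a ∂μ :=
          setIntegral_le_integral hexpw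
            (Eventually.of_forall fun a => mul_nonneg (Real.exp_pos _).le (hw0 a))
        have hfinal : ∫ a in A, w a ∂μ ≤
            Real.exp (η^2/(4*ε)) * (M * Real.exp (-(lam - ω)^2/(4*ε))) := by
          calc ∫ a in A, w a ∂μ ≤ _ := hstep1
            _ = _ := hstep2
            _ ≤ Real.exp (η^2/(4*ε)) * ∫ a : ℝ, Real.exp (-(lam - a)^2/(4*ε)) * w a ∂μ :=
                mul_le_mul_of_nonneg_left hstep3 (Real.exp_pos _).le
            _ ≤ Real.exp (η^2/(4*ε)) * (M * Real.exp (-(lam - ω)^2/(4*ε))) :=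
                mul_le_mul_of_nonneg_left hk (Real.exp_pos _).le
        refine hfinal.trans (le_of_eq ?_)
        rw [mul_comm (Real.exp (η^2/(4*ε))) _, mul_assoc, ← Real.exp_add]
        congr 2
        rw [hηdef, hεdef]
        have hn : ((n:ℝ)+1) ≠ 0 := by positivity
        field_simp
        ring
      have htend : Tendsto (fun n : ℕ => M * Real.exp (-(3*(lam - ω)^2/16) * ((n:ℝ)+1)))
          atTop (nhds 0) := by
        have hc : (0:ℝ) < 3*(lam - ω)^2/16 := by
          have : (0:ℝ) < (lam - ω)^2 := pow_pos (show (0:ℝ) < lam - ω by linarith) 2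
          linarith
        have h1 : Tendsto (fun n : ℕ => ((n:ℝ)+1)) atTop atTop :=
          tendsto_atTop_add_const_right _ _ tendsto_natCast_atTop_atTop
        have h2 : Tendsto (fun n : ℕ => -(3*(lam - ω)^2/16) * ((n:ℝ)+1)) atTop atBot := by
          simp_rw [neg_mul]
          exact tendsto_neg_atBot_iff.2 ((tendsto_const_mul_atTop_of_pos hc).2 h1)
        have h3 := (Real.tendsto_exp_atBot.comp h2).const_mul M
        simpa using h3
      have hle0 : ∫ a in A, w a ∂μ ≤ 0 :=
        ge_of_tendsto htend (Eventually.of_forall hbound)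
      exact le_antisymm hle0 hA_nonneg
    -- convert to a.e. statements
    have hae : ∀ᵐ a ∂μ, ∀ q : ℚ, ω < (q:ℝ) →
        a ∈ Set.Ioo ((q:ℝ) - ((q:ℝ) - ω)/2) ((q:ℝ) + ((q:ℝ) - ω)/2) → w a = 0 := by
      rw [ae_all_iff]
      intro q
      by_cases hq : ω < (q:ℝ)
      · have h0 := hkey (q:ℝ) hq
        have h1 := (setIntegral_eq_zero_iff_of_nonneg_ae
          (Eventually.of_forall fun a => hw0 a) hintw.integrableOn).1 h0
        have h2 := (ae_restrict_iff' measurableSet_Ioo).1 h1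
        filter_upwards [h2] with a ha
        intro _ hmem
        exact ha hmem
      · filter_upwards with a
        intro hq'
        exact absurd hq' hq
    show ∀ᵐ x ∂μ, ω < x → f x = 0
    filter_upwards [hae] with a ha hωa
    obtain ⟨q, hq1, hq2⟩ := exists_rat_btwn (show a < a + (a - ω)/2 by linarith)
    have hq : ω < (q:ℝ) := by linarith
    have hmem : a ∈ Set.Ioo ((q:ℝ) - ((q:ℝ) - ω)/2) ((q:ℝ) + ((q:ℝ) - ω)/2) := by
      constructor
      · linarith
      · linarith
    have hw_a := ha q hq hmem
    rw [hwdef, Set.indicator_of_mem (Set.mem_Ioi.2 hωa)] at hw_a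
    have hnf : ‖(f : ℝ → E) a‖ = 0 := by
      have := sq_eq_zero_iff.1 hw_a
      simpa using this
    exact norm_eq_zero.1 hnf
end

section
/- Let ω > 0. A vector f ∈ H belongs to PW_ω(D) if and only if: for every z ∈ ℂ the function λ ↦ e^{izλ} f(λ) belongs to H, the resulting H-valued function u(z) = (λ ↦ e^{izλ} f(λ)) is entire (analytic on all of ℂ as a map into H), u(t) = e^{itD} f for real t, and ‖u(z)‖ ≤ e^{ω |Im z|} ‖f‖ for all z ∈ ℂ. (Equivalently, the solution of the abstract Schrödinger Cauchy problem i ∂_t u = D u, u(0) = f, extends to an entire H-valued function satisfying this exponential bound.) -/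
open MeasureTheory Complex Filter
open scoped ENNReal Real

set_option linter.unusedSectionVars false

variable {E : Type*} [NormedAddCommGroup E] [InnerProductSpace ℂ E]
  [CompleteSpace E] [SecondCountableTopology E]

/-- Norm bound for an Lp element dominated a.e. by a multiple of `f`. -/
lemma norm_ae_le {μ : Measure ℝ} (F f : Lp E 2 μ) {C : ℝ} (hC : 0 ≤ C)
    (h : ∀ᵐ x ∂μ, ‖F x‖ ≤ C * ‖f x‖) : ‖F‖ ≤ C * ‖f‖ := by
  rw [Lp.norm_def, Lp.norm_def]
  have h1 : eLpNorm (⇑F) 2 μ ≤ eLpNorm (C • (⇑f)) 2 μ := by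
    refine eLpNorm_mono_ae ?_
    filter_upwards [h] with x hx
    simpa [norm_smul, Real.norm_eq_abs, _root_.abs_of_nonneg hC] using hx
  rw [eLpNorm_const_smul C (⇑f) 2 μ, Real.enorm_eq_ofReal hC] at h1
  calc (eLpNorm (⇑F) 2 μ).toReal ≤ (ENNReal.ofReal C * eLpNorm (⇑f) 2 μ).toReal := by
        refine ENNReal.toReal_mono ?_ h1
        exact ENNReal.mul_ne_top ENNReal.ofReal_ne_top (Lp.eLpNorm_ne_top f)
    _ = C * (eLpNorm (⇑f) 2 μ).toReal := by
        rw [ENNReal.toReal_mul, ENNReal.toReal_ofReal hC]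

lemma memLp_smul {μ : Measure ℝ} (f : Lp E 2 μ) {g : ℝ → ℂ}
    (hg : AEStronglyMeasurable g μ) {C : ℝ} (hC : 0 ≤ C)
    (h : ∀ᵐ x ∂μ, ‖g x • f x‖ ≤ C * ‖f x‖) :
    MemLp (fun x : ℝ => g x • f x) 2 μ := by
  refine MemLp.of_le ((Lp.memLp f).const_smul C) (hg.smul (Lp.aestronglyMeasurable f)) ?_
  filter_upwards [h] with x hx
  simpa [norm_smul, Real.norm_eq_abs, _root_.abs_of_nonneg hC] using hx

lemma abs_exp_Izx_le {z : ℂ} {x ω : ℝ} (hx0 : 0 ≤ x) (hxω : x ≤ ω) :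
    ‖Complex.exp (Complex.I * z * x)‖ ≤ Real.exp (ω * |z.im|) := by
  rw [Complex.norm_exp]
  apply Real.exp_le_exp.mpr
  have : (Complex.I * z * x).re = -z.im * x := by
    simp [Complex.mul_re, Complex.mul_im]
  rw [this]
  have h1 : -z.im ≤ |z.im| := neg_le_abs _
  nlinarith [abs_nonneg z.im]

lemma scalar_est {z h : ℂ} {x ω : ℝ} (hx0 : 0 ≤ x) (hxω : x ≤ ω)
    (hh : ‖h‖ * ω ≤ 1) :
    ‖Complex.exp (Complex.I * (z + h) * x) - Complex.exp (Complex.I * z * x)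
        - h * (Complex.I * x * Complex.exp (Complex.I * z * x))‖
      ≤ Real.exp (ω * |z.im|) * ω ^ 2 * ‖h‖ ^ 2 := by
  have hsplit : Complex.exp (Complex.I * (z + h) * x)
      = Complex.exp (Complex.I * z * x) * Complex.exp (Complex.I * h * x) := by
    rw [← Complex.exp_add]; ring_nf
  have hfac : Complex.exp (Complex.I * (z + h) * x) - Complex.exp (Complex.I * z * x)
      - h * (Complex.I * x * Complex.exp (Complex.I * z * x))
      = Complex.exp (Complex.I * z * x)
        * (Complex.exp (Complex.I * h * x) - 1 - Complex.I * h * x) := by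
    rw [hsplit]; ring
  rw [hfac, norm_mul]
  have habs : ‖Complex.I * h * x‖ = ‖h‖ * x := by
    simp [_root_.abs_of_nonneg hx0]
  have hle1 : ‖Complex.I * h * x‖ ≤ 1 := by
    rw [habs]
    calc ‖h‖ * x ≤ ‖h‖ * ω := by
          exact mul_le_mul_of_nonneg_left hxω (norm_nonneg h)
      _ ≤ 1 := hh
  have h2 := Complex.norm_exp_sub_one_sub_id_le hle1
  have h3 : ‖Complex.I * h * x‖ ^ 2 ≤ ω ^ 2 * ‖h‖ ^ 2 := by
    rw [habs]
    have hx2 : x ^ 2 ≤ ω ^ 2 := by nlinarith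
    calc (‖h‖ * x) ^ 2 = ‖h‖ ^ 2 * x ^ 2 := by ring
      _ ≤ ‖h‖ ^ 2 * ω ^ 2 := by nlinarith [sq_nonneg ‖h‖]
      _ = ω ^ 2 * ‖h‖ ^ 2 := by ring
  have h4 := abs_exp_Izx_le (z := z) hx0 hxω
  have e1 : (0:ℝ) < Real.exp (ω * |z.im|) := Real.exp_pos _
  nlinarith [norm_nonneg (Complex.exp (Complex.I * z * x)),
    norm_nonneg (Complex.exp (Complex.I * h * x) - 1 - Complex.I * h * x)]

set_option maxHeartbeats 1000000 in
/-- Let `ω > 0`. A vector `f ∈ H` belongs to `PW_ω(D)` if and only if: for every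
`z ∈ ℂ` the function `λ ↦ e^{izλ} f(λ)` belongs to `H`, the resulting `H`-valued function
`u(z) = (λ ↦ e^{izλ} f(λ))` is entire, `u(t) = e^{itD} f` for real `t`, and
`‖u(z)‖ ≤ e^{ω |Im z|} ‖f‖` for all `z ∈ ℂ`. -/
theorem mem_PW_iff_entire_schrodinger_solution
    (μ : Measure ℝ) [SigmaFinite μ] (hμ : μ (Set.Iio 0) = 0)
    (ω : ℝ) (hω : 0 < ω) (f : Lp E 2 μ) :
    f ∈ PW (E := E) μ ω ↔
      ∃ u : ℂ → Lp E 2 μ,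
        (∀ z : ℂ, ((u z : Lp E 2 μ) : ℝ → E) =ᵐ[μ]
          fun x : ℝ => Complex.exp (Complex.I * z * x) • f x) ∧
        Differentiable ℂ u ∧
        (∀ t : ℝ, u (t : ℂ) = Ugrp μ t f) ∧
        ∀ z : ℂ, ‖u z‖ ≤ Real.exp (ω * |z.im|) * ‖f‖ := by
  constructor
  · -- forward direction
    intro hf
    have h0 : ∀ᵐ x ∂μ, 0 ≤ x := by
      have hs : {x : ℝ | ¬ 0 ≤ x} = Set.Iio 0 := by ext x; simp [not_le]
      rw [ae_iff, hs]; exact hμ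
    have hkey : ∀ᵐ x ∂μ, f x ≠ 0 → 0 ≤ x ∧ x ≤ ω := by
      filter_upwards [h0, hf] with x h1 h2 h3
      refine ⟨h1, ?_⟩
      by_contra hc
      exact h3 (h2 (lt_of_not_ge hc))
    have hbd : ∀ (g : ℝ → ℂ) (C : ℝ), (∀ x : ℝ, 0 ≤ x → x ≤ ω → ‖g x‖ ≤ C) →
        ∀ᵐ x ∂μ, ‖g x • f x‖ ≤ C * ‖f x‖ := by
      intro g C hg
      filter_upwards [hkey] with x hx
      by_cases hfx : f x = 0
      · simp [hfx]
      · obtain ⟨h1, h2⟩ := hx hfx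
        rw [norm_smul]
        exact mul_le_mul_of_nonneg_right (hg x h1 h2) (norm_nonneg _)
    have mem : ∀ z : ℂ, MemLp (fun x : ℝ => Complex.exp (Complex.I * z * x) • f x) 2 μ := by
      intro z
      refine memLp_smul f ?_ (Real.exp_pos (ω * |z.im|)).le
        (hbd _ _ (fun x h1 h2 => abs_exp_Izx_le h1 h2))
      exact (Complex.continuous_exp.comp (by fun_prop)).aestronglyMeasurable
    have memv : ∀ z : ℂ, MemLp
        (fun x : ℝ => (Complex.I * x * Complex.exp (Complex.I * z * x)) • f x) 2 μ := by
      intro z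
      have hc : Continuous fun x : ℝ => Complex.I * (x:ℂ) * Complex.exp (Complex.I * z * x) :=
        (continuous_const.mul Complex.continuous_ofReal).mul
          (Complex.continuous_exp.comp (by fun_prop))
      refine memLp_smul f hc.aestronglyMeasurable
        (C := ω * Real.exp (ω * |z.im|)) (by positivity) (hbd _ _ ?_)
      intro x h1 h2
      rw [norm_mul, norm_mul, Complex.norm_I, one_mul, Complex.norm_real, Real.norm_eq_abs,
        _root_.abs_of_nonneg h1]
      exact mul_le_mul h2 (abs_exp_Izx_le h1 h2) (norm_nonneg _) hω.le
    set u : ℂ → Lp E 2 μ := fun z => (mem z).toLp _ with hu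
    set v : ℂ → Lp E 2 μ := fun z => (memv z).toLp _ with hv
    refine ⟨u, fun z => MemLp.coeFn_toLp (mem z), ?_, ?_, ?_⟩
    · -- differentiability
      intro z
      refine HasDerivAt.differentiableAt (f' := v z) ?_
      rw [hasDerivAt_iff_isLittleO, Asymptotics.isLittleO_iff]
      intro c hc
      set K : ℝ := Real.exp (ω * |z.im|) * ω ^ 2 * ‖f‖ + 1 with hK
      have hK0 : 0 < K := by positivity
      have hδ : 0 < min ω⁻¹ (c / K) := lt_min (by positivity) (by positivity)
      filter_upwards [Metric.ball_mem_nhds z hδ] with z' hz'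
      have hd : ‖z' - z‖ < min ω⁻¹ (c / K) := by
        rwa [Metric.mem_ball, Complex.dist_eq] at hz'
      have hd1 : ‖z' - z‖ * ω ≤ 1 := by
        have : ‖z' - z‖ ≤ ω⁻¹ := le_of_lt (lt_of_lt_of_le hd (min_le_left _ _))
        calc ‖z' - z‖ * ω ≤ ω⁻¹ * ω := mul_le_mul_of_nonneg_right this hω.le
          _ = 1 := inv_mul_cancel₀ (ne_of_gt hω)
      have hnorm : ‖u z' - u z - (z' - z) • v z‖
          ≤ (Real.exp (ω * |z.im|) * ω ^ 2 * ‖z' - z‖ ^ 2) * ‖f‖ := by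
        refine norm_ae_le _ f (by positivity) ?_
        filter_upwards [hkey, Lp.coeFn_sub (u z' - u z) ((z' - z) • v z),
          Lp.coeFn_sub (u z') (u z), Lp.coeFn_smul (z' - z) (v z),
          MemLp.coeFn_toLp (mem z'), MemLp.coeFn_toLp (mem z), MemLp.coeFn_toLp (memv z)]
          with x hx q1 q2 q3 q4 q5 q6
        rw [q1, Pi.sub_apply, q2, Pi.sub_apply, q3, Pi.smul_apply, q4, q5, q6]
        by_cases hfx : f x = 0
        · simp [hfx]
        · obtain ⟨h1, h2⟩ := hx hfx
          have hcomb : Complex.exp (Complex.I * z' * x) • f x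
                - Complex.exp (Complex.I * z * x) • f x
                - (z' - z) • ((Complex.I * x * Complex.exp (Complex.I * z * x)) • f x)
              = (Complex.exp (Complex.I * z' * x) - Complex.exp (Complex.I * z * x)
                - (z' - z) * (Complex.I * x * Complex.exp (Complex.I * z * x))) • f x := by
            rw [smul_smul, sub_smul, sub_smul]
          rw [hcomb, norm_smul]
          have hest := scalar_est (z := z) (h := z' - z) h1 h2 hd1
          rw [add_sub_cancel] at hest
          exact mul_le_mul_of_nonneg_right hest (norm_nonneg _)
      have hA0 : (0:ℝ) ≤ ‖z' - z‖ := norm_nonneg _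
      have hA1 : K * ‖z' - z‖ ≤ c := by
        have : ‖z' - z‖ ≤ c / K := le_of_lt (lt_of_lt_of_le hd (min_le_right _ _))
        calc K * ‖z' - z‖ ≤ K * (c / K) := mul_le_mul_of_nonneg_left this hK0.le
          _ = c := by field_simp
      have hEK : Real.exp (ω * |z.im|) * ω ^ 2 * ‖f‖ ≤ K := by
        rw [hK]; linarith
      calc ‖u z' - u z - (z' - z) • v z‖
          ≤ (Real.exp (ω * |z.im|) * ω ^ 2 * ‖z' - z‖ ^ 2) * ‖f‖ := hnorm
        _ ≤ c * ‖z' - z‖ := by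
            nlinarith [mul_le_mul_of_nonneg_right hA1 hA0, mul_nonneg hA0 hA0, Real.exp_pos (ω * |z.im|), norm_nonneg f]
    · -- Ugrp identity
      intro t
      refine Lp.ext ?_
      exact (MemLp.coeFn_toLp (mem t)).trans (MemLp.coeFn_toLp (memLp_U μ t f)).symm
    · -- norm bound
      intro z
      refine norm_ae_le _ f (Real.exp_pos _).le ?_
      filter_upwards [MemLp.coeFn_toLp (mem z),
        hbd _ _ (fun x h1 h2 => abs_exp_Izx_le (z := z) h1 h2)] with x q1 q2
      rw [q1]; exact q2
  · -- reverse direction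
    rintro ⟨u, hrep, -, -, hbound⟩
    have hA : ∀ n : ℕ, ∀ᵐ x ∂μ, (ω + 1 / (n + 1) ≤ x) → f x = 0 := by
      intro n
      set ε : ℝ := 1 / (n + 1) with hε
      have hε0 : 0 < ε := by positivity
      set A : Set ℝ := Set.Ici (ω + ε) with hAdef
      have hAm : MeasurableSet A := measurableSet_Ici
      set T := eLpNorm (⇑f) 2 (μ.restrict A) with hT
      have hTle : ∀ s : ℝ, 0 < s → T ≤ ENNReal.ofReal (Real.exp (-(s * ε)) * ‖f‖) := by
        intro s hs
        set z : ℂ := -(s : ℂ) * Complex.I with hz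
        have hzim : |z.im| = s := by
          simp [hz, _root_.abs_of_nonneg hs.le]
        have hrepr : ∀ x : ℝ, ‖Complex.exp (Complex.I * z * x)‖ = Real.exp (s * x) := by
          intro x
          rw [Complex.norm_exp]
          congr 1
          have : Complex.I * z * x = (s : ℂ) * x := by
            rw [hz]; ring_nf; rw [Complex.I_sq]; ring
          rw [this]
          simp [Complex.mul_re]
        have h1 : ENNReal.ofReal (Real.exp (s * (ω + ε))) * T
            ≤ ENNReal.ofReal (Real.exp (s * ω) * ‖f‖) := by
          have step1 : ENNReal.ofReal (Real.exp (s * (ω + ε))) * T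
              = eLpNorm ((Real.exp (s * (ω + ε))) • (⇑f)) 2 (μ.restrict A) := by
            rw [eLpNorm_const_smul, Real.enorm_eq_ofReal (Real.exp_pos _).le]
          have step2 : eLpNorm ((Real.exp (s * (ω + ε))) • (⇑f)) 2 (μ.restrict A)
              ≤ eLpNorm (fun x : ℝ => Complex.exp (Complex.I * z * x) • f x) 2 (μ.restrict A) := by
            refine eLpNorm_mono_ae ?_
            filter_upwards [ae_restrict_mem hAm] with x hxA
            have hx : ω + ε ≤ x := hxA
            rw [Pi.smul_apply, norm_smul, norm_smul, Real.norm_eq_abs,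
              _root_.abs_of_nonneg (Real.exp_pos _).le, hrepr x]
            have : Real.exp (s * (ω + ε)) ≤ Real.exp (s * x) :=
              Real.exp_le_exp.mpr (mul_le_mul_of_nonneg_left hx hs.le)
            exact mul_le_mul_of_nonneg_right this (norm_nonneg _)
          have step3 : eLpNorm (fun x : ℝ => Complex.exp (Complex.I * z * x) • f x) 2 (μ.restrict A)
              ≤ eLpNorm (fun x : ℝ => Complex.exp (Complex.I * z * x) • f x) 2 μ :=
            eLpNorm_mono_measure _ Measure.restrict_le_self
          have step4 : eLpNorm (fun x : ℝ => Complex.exp (Complex.I * z * x) • f x) 2 μ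
              = eLpNorm (⇑(u z)) 2 μ := eLpNorm_congr_ae (hrep z).symm
          have step5 : eLpNorm (⇑(u z)) 2 μ = ENNReal.ofReal ‖u z‖ := by
            rw [Lp.norm_def, ENNReal.ofReal_toReal (Lp.eLpNorm_ne_top _)]
          have step6 : ENNReal.ofReal ‖u z‖ ≤ ENNReal.ofReal (Real.exp (s * ω) * ‖f‖) := by
            refine ENNReal.ofReal_le_ofReal ?_
            have := hbound z
            rwa [hzim, mul_comm ω s] at this
          calc ENNReal.ofReal (Real.exp (s * (ω + ε))) * T
              = eLpNorm ((Real.exp (s * (ω + ε))) • (⇑f)) 2 (μ.restrict A) := step1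
            _ ≤ _ := step2
            _ ≤ _ := step3
            _ = _ := step4
            _ = _ := step5
            _ ≤ _ := step6
        have hsplit : Real.exp (s * ω) * ‖f‖
            = Real.exp (s * (ω + ε)) * (Real.exp (-(s * ε)) * ‖f‖) := by
          rw [← mul_assoc, ← Real.exp_add]; ring_nf
        rw [hsplit, ENNReal.ofReal_mul (Real.exp_pos _).le] at h1
        exact (ENNReal.mul_le_mul_iff_right
          (by simp [ENNReal.ofReal_eq_zero, not_le, Real.exp_pos])
          ENNReal.ofReal_ne_top).mp h1
      have hT0 : T = 0 := by
        have htend : Tendsto (fun k : ℕ => ENNReal.ofReal (Real.exp (-((k + 1) * ε)) * ‖f‖))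
            atTop (nhds 0) := by
          have h1 : Tendsto (fun k : ℕ => Real.exp (-(((k:ℝ) + 1) * ε))) atTop (nhds 0) :=
            Real.tendsto_exp_neg_atTop_nhds_zero.comp
              ((tendsto_natCast_atTop_atTop.atTop_add tendsto_const_nhds).atTop_mul_const hε0)
          have h2 : Tendsto (fun k : ℕ => Real.exp (-(((k:ℝ) + 1) * ε)) * ‖f‖) atTop (nhds 0) := by
            simpa using h1.mul_const ‖f‖
          have h3 := (ENNReal.tendsto_ofReal h2)
          simpa using h3
        refine le_antisymm ?_ (by simp)
        refine ge_of_tendsto htend (Eventually.of_forall fun k => ?_)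
        exact hTle ((k : ℝ) + 1) (by positivity)
      have hf0 : ⇑f =ᵐ[μ.restrict A] 0 :=
        (eLpNorm_eq_zero_iff ((Lp.aestronglyMeasurable f).restrict)
          (by norm_num : (2 : ℝ≥0∞) ≠ 0)).mp hT0
      have := (ae_restrict_iff' hAm).mp hf0
      filter_upwards [this] with x hx hx2
      exact hx hx2
    have hall := ae_all_iff.mpr hA
    filter_upwards [hall] with x hx hωx
    obtain ⟨n, hn⟩ := exists_nat_one_div_lt (sub_pos.mpr hωx)
    exact hx n (by linarith)
end

section
/- For every integer m ≥ 1 and every pair 0 ≤ k ≤ m there is a constant C(m,k) > 0 such that for every ω > 0 there exists a bounded linear operator Q : H → H with range contained in PW_ω(D) satisfying ‖Q f − f‖ ≤ ( C(m,k) / ω^k ) Ω_{m−k}(D^k f, 1/ω) for every f ∈ Dom(D^k); consequently E(f,ω) ≤ ( C(m,k) / ω^k ) Ω_{m−k}(D^k f, 1/ω). -/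
open MeasureTheory Complex Filter
open scoped ENNReal Real

set_option linter.unusedSectionVars false

variable {E : Type*} [NormedAddCommGroup E] [InnerProductSpace ℂ E]
  [CompleteSpace E] [SecondCountableTopology E]

/-- The best approximation `E(f, ω) = inf { ‖f - g‖ : g ∈ PW_ω(D) }`. -/
noncomputable def bestApprox (μ : Measure ℝ) (f : Lp E 2 μ) (ω : ℝ) : ℝ :=
  ⨅ g : PW (E := E) μ ω, ‖f - (g : Lp E 2 μ)‖

/-- The difference operator `Δ^m_τ = (e^{iτD} - I)^m`. -/
noncomputable def Delta (μ : Measure ℝ) (τ : ℝ) : ℕ → Lp E 2 μ → Lp E 2 μ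
  | 0, f => f
  | (m + 1), f => Ugrp μ τ (Delta μ τ m f) - Delta μ τ m f

/-- The modulus of continuity `Ω_m(f, s) = sup_{|τ| ≤ s} ‖Δ^m_τ f‖`. -/
noncomputable def Omega (μ : Measure ℝ) (m : ℕ) (f : Lp E 2 μ) (s : ℝ) : ℝ :=
  ⨆ τ : {τ : ℝ // |τ| ≤ s}, ‖Delta μ τ.1 m f‖

noncomputable def Fn (n : ℕ) (u : ℝ) : ℝ := (2 - 2 * Real.cos u) ^ n

lemma Fn_nonneg (n : ℕ) (u : ℝ) : 0 ≤ Fn n u :=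
  pow_nonneg (by nlinarith [Real.cos_le_one u]) n

lemma Fn_continuous (n : ℕ) : Continuous (Fn n) := by
  unfold Fn; fun_prop

lemma Fn_periodic (n : ℕ) : Function.Periodic (Fn n) (2 * π) := by
  intro u; simp [Fn, Real.cos_add_two_pi]

lemma Fn_intInt (n : ℕ) (a b : ℝ) : IntervalIntegrable (Fn n) volume a b :=
  (Fn_continuous n).intervalIntegrable a b

lemma cos_quad_bound {u : ℝ} (h0 : 0 ≤ u) (h1 : u ≤ 1) : u ^ 2 / 4 ≤ 2 - 2 * Real.cos u := by
  have h2 : Real.cos u = 1 - 2 * Real.sin (u / 2) ^ 2 := by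
    have h := Real.cos_two_mul (u / 2)
    rw [show 2 * (u / 2) = u by ring] at h
    nlinarith [Real.sin_sq_add_cos_sq (u / 2)]
  rcases eq_or_lt_of_le h0 with h | h
  · simp [← h]
  · have hs : u / 2 - (u / 2) ^ 3 / 4 < Real.sin (u / 2) :=
      by have := Real.sin_gt_sub_cube (x := u / 2) (by linarith); nlinarith [pow_pos (show (0:ℝ) < u / 2 by linarith) 3]
    have hs0 : 0 ≤ Real.sin (u / 2) :=
      Real.sin_nonneg_of_nonneg_of_le_pi (by linarith)
        (by linarith [Real.pi_gt_three])
    have huu : u * u ≤ 1 := by nlinarith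
    have hu3 : u ^ 3 ≤ u := by nlinarith
    have hs2 : u / 4 ≤ Real.sin (u / 2) := by nlinarith
    have hsq := mul_le_mul hs2 hs2 (by linarith) hs0
    nlinarith

lemma bump_lower (n : ℕ) : (1 / 4) ^ n / (2 * n + 1) ≤ ∫ u in (0:ℝ)..1, Fn n u := by
  have h1 : ∫ u in (0:ℝ)..1, (1/4:ℝ) ^ n * u ^ (2 * n) = (1/4) ^ n / (2 * n + 1) := by
    rw [intervalIntegral.integral_const_mul, integral_pow]
    push_cast
    ring
  rw [← h1]
  apply intervalIntegral.integral_mono_on zero_le_one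
  · exact (by fun_prop : Continuous fun u : ℝ => (1/4:ℝ)^n * u ^ (2*n)).intervalIntegrable 0 1
  · exact Fn_intInt n 0 1
  · intro u hu
    have := cos_quad_bound hu.1 hu.2
    calc (1/4:ℝ) ^ n * u ^ (2*n) = (u ^ 2 / 4) ^ n := by rw [pow_mul]; ring
    _ ≤ (2 - 2 * Real.cos u) ^ n := by
        apply pow_le_pow_left₀ (by positivity) this _

lemma period_lower (n : ℕ) : π ≤ ∫ u in (0:ℝ)..(2 * π), Fn n u := by
  have hπ := Real.pi_pos
  have h2 : π = ∫ u in (π/2)..(π/2 + π), (1:ℝ) := by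
    simp
  have h3 : (∫ u in (π/2)..(π/2 + π), (1:ℝ)) ≤ ∫ u in (π/2)..(π/2 + π), Fn n u := by
    apply intervalIntegral.integral_mono_on (by linarith)
      intervalIntegrable_const (Fn_intInt n _ _)
    intro u hu
    have hc : Real.cos u ≤ 0 :=
      Real.cos_nonpos_of_pi_div_two_le_of_le hu.1 (by linarith [hu.2])
    exact one_le_pow₀ (by linarith)
  have h4 : (∫ u in (π/2)..(π/2 + π), Fn n u) ≤ ∫ u in (0:ℝ)..(2*π), Fn n u := by
    apply intervalIntegral.integral_mono_interval (by linarith) (by linarith) (by linarith)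
      (Filter.Eventually.of_forall fun u => Fn_nonneg n u) (Fn_intInt n _ _)
  linarith [h2 ▸ h3]

lemma J_lower (n : ℕ) {T : ℝ} (hT : 1 ≤ T) :
    (1/4)^n / (2*n+1) / (4 * π) * T ≤ ∫ u in (0:ℝ)..T, Fn n u := by
  have hπ := Real.pi_pos
  set c₀ : ℝ := (1/4)^n / (2*n+1) with hc₀
  have hc₀pos : 0 < c₀ := by positivity
  have hc₀le : c₀ ≤ 1 := by
    rw [hc₀, div_le_one (by positivity)]
    calc ((1:ℝ)/4)^n ≤ 1 := pow_le_one₀ (by norm_num) (by norm_num)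
    _ ≤ 2*n+1 := by push_cast; linarith [Nat.cast_nonneg (α := ℝ) n]
  rcases le_or_gt T (4 * π) with hT4 | hT4
  · have h1 : (∫ u in (0:ℝ)..1, Fn n u) ≤ ∫ u in (0:ℝ)..T, Fn n u :=
      intervalIntegral.integral_mono_interval le_rfl zero_le_one hT
        (Filter.Eventually.of_forall fun u => Fn_nonneg n u) (Fn_intInt n _ _)
    have h2 := bump_lower n
    have : c₀ / (4*π) * T ≤ c₀ := by
      rw [div_mul_eq_mul_div, div_le_iff₀ (by positivity)]
      nlinarith
    linarith
  · set N : ℤ := ⌊T / (2*π)⌋ with hN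
    have hNT : (N : ℝ) * (2*π) ≤ T := by
      rw [hN]
      calc (⌊T / (2*π)⌋ : ℝ) * (2*π) ≤ T / (2*π) * (2*π) := by
            apply mul_le_mul_of_nonneg_right (Int.floor_le _) (by linarith)
      _ = T := by field_simp
    have hN2 : (2:ℝ) ≤ N := by
      have : (2:ℝ) ≤ T / (2*π) := by rw [le_div_iff₀ (by linarith)]; linarith
      calc (2:ℝ) = ((2:ℤ):ℝ) := by norm_num
      _ ≤ (N:ℝ) := by exact_mod_cast Int.le_floor.mpr (by exact_mod_cast this)
    have hint : ∫ u in (0:ℝ)..(N • (2*π)), Fn n u = N • ∫ u in (0:ℝ)..(2*π), Fn n u := by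
      have := (Fn_periodic n).intervalIntegral_add_zsmul_eq N 0 (Fn_intInt n)
      simpa using this
    have hmono : (∫ u in (0:ℝ)..(N • (2*π)), Fn n u) ≤ ∫ u in (0:ℝ)..T, Fn n u := by
      apply intervalIntegral.integral_mono_interval le_rfl (by positivity) ?_
        (Filter.Eventually.of_forall fun u => Fn_nonneg n u) (Fn_intInt n _ _)
      · simpa using hNT
    have hNlow : T / (4*π) ≤ (N:ℝ) := by
      have : T / (2*π) - 1 ≤ (N:ℝ) := by
        have := Int.sub_one_lt_floor (T / (2*π))
        rw [hN]; linarith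
      have h1 : T / (4*π) ≤ T / (2*π) - 1 := by
        rw [div_sub' (by positivity), div_le_div_iff₀ (by positivity) (by positivity)]
        nlinarith
      linarith
    have hP := period_lower n
    have hzs : (N • ∫ u in (0:ℝ)..(2*π), Fn n u) = (N:ℝ) * ∫ u in (0:ℝ)..(2*π), Fn n u :=
      zsmul_eq_mul _ _
    have h5 : (T / (4*π)) * π ≤ (N:ℝ) * ∫ u in (0:ℝ)..(2*π), Fn n u :=
      mul_le_mul hNlow hP (by positivity) (by linarith)
    have h6 : (T/(4*π)) * π = T/4 := by field_simp
    have h7 : c₀/(4*π)*T ≤ T/4 := by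
      rw [div_mul_eq_mul_div, div_le_div_iff₀ (by positivity) (by norm_num)]
      have hπ1 : (1:ℝ) ≤ π := by linarith [Real.pi_gt_three]
      nlinarith [mul_le_mul_of_nonneg_right hc₀le (by nlinarith : (0:ℝ) ≤ T * 4),
        mul_le_mul_of_nonneg_left (by linarith : (4:ℝ) ≤ 4 * π) (by nlinarith : (0:ℝ) ≤ T)]
    have h8 : (N:ℝ) * (∫ u in (0:ℝ)..(2*π), Fn n u) ≤ ∫ u in (0:ℝ)..T, Fn n u := by
      rw [← hzs, ← hint]; exact hmono
    linarith

/-- The key multiplier lower bound: the average of `(2-2cos(τx))^n` over `τ ∈ [0,s]`. -/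
lemma I_lower (n : ℕ) {s x : ℝ} (hs : 0 < s) (hx : 0 < x) (hxs : 1 ≤ x * s) :
    (1/4)^n / (2*n+1) / (4 * π) * s ≤ ∫ τ in (0:ℝ)..s, Fn n (τ * x) := by
  have hx' : x ≠ 0 := ne_of_gt hx
  have hsub : (∫ τ in (0:ℝ)..s, Fn n (τ * x)) = x⁻¹ • ∫ u in (0:ℝ)..(s * x), Fn n u := by
    simpa using intervalIntegral.integral_comp_mul_right (Fn n) hx' (a := 0) (b := s)
  rw [hsub]
  have hJ := J_lower n (T := s * x) (by linarith [hxs, mul_comm x s])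
  rw [smul_eq_mul]
  set c := (1/4:ℝ)^n / (2*n+1) / (4 * π) with hc
  have hcpos : 0 < c := by
    have := Real.pi_pos
    positivity
  calc c * s = x⁻¹ * (c * (s * x)) := by field_simp
  _ ≤ x⁻¹ * ∫ u in (0:ℝ)..(s * x), Fn n u := by
      apply mul_le_mul_of_nonneg_left hJ (by positivity)

section LpStuff

variable {E : Type*} [NormedAddCommGroup E] [InnerProductSpace ℂ E]
  [CompleteSpace E] [SecondCountableTopology E]

lemma delta_ae (μ : Measure ℝ) (τ : ℝ) (n : ℕ) (f : Lp E 2 μ) :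
    ⇑(Delta μ τ n f) =ᵐ[μ]
      fun x => (Complex.exp (Complex.I * τ * x) - 1) ^ n • f x := by
  induction n with
  | zero =>
    filter_upwards with x
    simp [Delta]
  | succ n ih =>
    have h1 : ⇑(Delta μ τ (n+1) f)
        =ᵐ[μ] ⇑(Ugrp μ τ (Delta μ τ n f)) - ⇑(Delta μ τ n f) := by
      rw [show Delta μ τ (n+1) f = Ugrp μ τ (Delta μ τ n f) - Delta μ τ n f from rfl]
      exact Lp.coeFn_sub _ _
    have h2 : ⇑(Ugrp μ τ (Delta μ τ n f)) =ᵐ[μ]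
        fun x => Complex.exp (Complex.I * τ * x) • (Delta μ τ n f) x :=
      MemLp.coeFn_toLp _
    filter_upwards [h1, h2, ih] with x hx1 hx2 hx3
    rw [hx1]
    simp only [Pi.sub_apply]
    rw [hx2, hx3, smul_smul, ← sub_smul]
    congr 1
    ring

lemma exp_norm_le (τ x : ℝ) : ‖Complex.exp (Complex.I * τ * x) - 1‖ ≤ 2 := by
  calc ‖Complex.exp (Complex.I * τ * x) - 1‖
      ≤ ‖Complex.exp (Complex.I * τ * x)‖ + ‖(1:ℂ)‖ := norm_sub_le _ _
  _ ≤ 2 := by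
      simp [Complex.norm_exp]
      norm_num

lemma delta_norm_le (μ : Measure ℝ) (τ : ℝ) (n : ℕ) (f : Lp E 2 μ) :
    ‖Delta μ τ n f‖ ≤ 2 ^ n * ‖f‖ := by
  have h1 : eLpNorm (⇑(Delta μ τ n f)) 2 μ
      = eLpNorm (fun x : ℝ => (Complex.exp (Complex.I * τ * x) - 1) ^ n • f x) 2 μ :=
    eLpNorm_congr_ae (delta_ae μ τ n f)
  have h2 : eLpNorm (fun x : ℝ => (Complex.exp (Complex.I * τ * x) - 1) ^ n • f x) 2 μ
      ≤ eLpNorm ((2:ℝ) ^ n • ⇑f) 2 μ := by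
    apply eLpNorm_mono_ae
    filter_upwards with x
    rw [norm_smul, Pi.smul_apply, norm_smul, norm_pow]
    have h3 : ‖Complex.exp (Complex.I * τ * x) - 1‖ ^ n ≤ 2 ^ n :=
      pow_le_pow_left₀ (norm_nonneg _) (exp_norm_le τ x) n
    have : ‖(2:ℝ)^n‖ = 2^n := by
      rw [Real.norm_eq_abs, _root_.abs_of_nonneg (by positivity)]
    nlinarith [norm_nonneg (f x), pow_nonneg (norm_nonneg (Complex.exp (Complex.I * τ * x) - 1)) n]
  have h3 : eLpNorm ((2:ℝ) ^ n • ⇑f) 2 μ = ‖(2:ℝ)^n‖₊ • eLpNorm (⇑f) 2 μ :=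
    eLpNorm_const_smul _ _ _ _
  rw [Lp.norm_def, Lp.norm_def]
  have h4 : eLpNorm (⇑(Delta μ τ n f)) 2 μ ≤ (‖(2:ℝ)^n‖₊ : ℝ≥0∞) * eLpNorm (⇑f) 2 μ := by
    rw [h1]
    refine h2.trans (le_of_eq ?_)
    rw [h3, ENNReal.smul_def, smul_eq_mul]
  calc (eLpNorm (⇑(Delta μ τ n f)) 2 μ).toReal
      ≤ ((‖(2:ℝ)^n‖₊ : ℝ≥0∞) * eLpNorm (⇑f) 2 μ).toReal :=
    ENNReal.toReal_mono (ENNReal.mul_ne_top ENNReal.coe_ne_top (Lp.eLpNorm_ne_top f)) h4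
  _ = 2 ^ n * (eLpNorm (⇑f) 2 μ).toReal := by
      rw [ENNReal.toReal_mul, ENNReal.coe_toReal, coe_nnnorm]
      congr 1
      rw [Real.norm_eq_abs, _root_.abs_of_nonneg (by positivity)]

lemma omega_nonneg (μ : Measure ℝ) (n : ℕ) (f : Lp E 2 μ) (s : ℝ) :
    0 ≤ Omega μ n f s :=
  Real.iSup_nonneg fun _ => norm_nonneg _

lemma norm_delta_le_omega (μ : Measure ℝ) (n : ℕ) (f : Lp E 2 μ) {s τ : ℝ}
    (hτ : |τ| ≤ s) : ‖Delta μ τ n f‖ ≤ Omega μ n f s := by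
  apply le_ciSup (f := fun τ : {τ : ℝ // |τ| ≤ s} => ‖Delta μ τ.1 n f‖) ?_ ⟨τ, hτ⟩
  refine ⟨2 ^ n * ‖f‖, ?_⟩
  rintro _ ⟨σ, rfl⟩
  exact delta_norm_le μ σ.1 n f

lemma sq_eLpNorm (μ : Measure ℝ) (g : ℝ → E) :
    (eLpNorm g 2 μ) ^ 2 = ∫⁻ x, (‖g x‖₊ : ℝ≥0∞) ^ 2 ∂μ := by
  rw [eLpNorm_eq_lintegral_rpow_enorm_toReal two_ne_zero ENNReal.ofNat_ne_top]
  have h2 : ((2:ℝ≥0∞)).toReal = 2 := by simp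
  rw [h2]
  rw [← ENNReal.rpow_natCast _ 2, ← ENNReal.rpow_mul]
  norm_num
  rfl

lemma exp_normSq (τ x : ℝ) :
    (‖Complex.exp (Complex.I * τ * x) - 1‖₊ : ℝ≥0∞) ^ 2
      = ENNReal.ofReal (2 - 2 * Real.cos (τ * x)) := by
  have h1 : Complex.exp (Complex.I * τ * x)
      = Complex.cos ((τ * x : ℝ) : ℂ) + Complex.sin ((τ * x : ℝ) : ℂ) * Complex.I := by
    rw [show Complex.I * τ * x = ((τ * x : ℝ) : ℂ) * Complex.I by push_cast; ring,
      Complex.exp_mul_I]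
  have h2 : ‖Complex.exp (Complex.I * τ * x) - 1‖ ^ 2 = 2 - 2 * Real.cos (τ * x) := by
    rw [h1, Complex.sq_norm, Complex.normSq_apply]
    simp only [Complex.add_re, Complex.sub_re, Complex.mul_re, Complex.add_im, Complex.sub_im,
      Complex.mul_im, Complex.I_re, Complex.I_im, Complex.cos_ofReal_re, Complex.sin_ofReal_re,
      Complex.cos_ofReal_im, Complex.sin_ofReal_im, Complex.one_re, Complex.one_im]
    nlinarith [Real.sin_sq_add_cos_sq (τ * x)]
  rw [← enorm_eq_nnnorm, ← ofReal_norm, ← ENNReal.ofReal_pow (norm_nonneg _), h2]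

lemma mul_rep (n : ℕ) (τ x : ℝ) (v : E) :
    (‖(Complex.exp (Complex.I * τ * x) - 1) ^ n • v‖₊ : ℝ≥0∞) ^ 2
      = ENNReal.ofReal (Fn n (τ * x)) * (‖v‖₊ : ℝ≥0∞) ^ 2 := by
  rw [nnnorm_smul, ENNReal.coe_mul, mul_pow, nnnorm_pow, ENNReal.coe_pow, ← pow_mul,
    mul_comm n 2, pow_mul, exp_normSq]
  rw [show Fn n (τ * x) = (2 - 2 * Real.cos (τ * x)) ^ n from rfl,
    ENNReal.ofReal_pow (by nlinarith [Real.cos_le_one (τ * x)])]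

lemma memLp_ind (μ : Measure ℝ) (ω : ℝ) (f : Lp E 2 μ) :
    MemLp ((Set.Iic ω).indicator (fun x => f x)) 2 μ :=
  (Lp.memLp f).indicator measurableSet_Iic

noncomputable def Qop (μ : Measure ℝ) (ω : ℝ) : Lp E 2 μ →L[ℂ] Lp E 2 μ :=
  LinearMap.mkContinuous
    { toFun := fun f => (memLp_ind μ ω f).toLp _
      map_add' := by
        intro f g
        rw [← MemLp.toLp_add (memLp_ind μ ω f) (memLp_ind μ ω g)]
        apply MemLp.toLp_congr
        filter_upwards [Lp.coeFn_add f g] with x hx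
        by_cases h : x ∈ Set.Iic ω
        · simp only [Set.indicator_of_mem h, Pi.add_apply, hx]
        · simp only [Set.indicator_of_notMem h, Pi.add_apply, add_zero]
      map_smul' := by
        intro c f
        simp only [RingHom.id_apply]
        rw [← MemLp.toLp_const_smul c (memLp_ind μ ω f)]
        apply MemLp.toLp_congr
        filter_upwards [Lp.coeFn_smul c f] with x hx
        by_cases h : x ∈ Set.Iic ω
        · simp only [Set.indicator_of_mem h, Pi.smul_apply, hx]
        · simp only [Set.indicator_of_notMem h, Pi.smul_apply, smul_zero] }
    1 (by
      intro f
      rw [one_mul]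
      simp only [LinearMap.coe_mk, AddHom.coe_mk]
      rw [Lp.norm_toLp _ (memLp_ind μ ω f), Lp.norm_def]
      exact ENNReal.toReal_mono (Lp.eLpNorm_ne_top f) (eLpNorm_indicator_le _))

lemma coeFn_Qop (μ : Measure ℝ) (ω : ℝ) (f : Lp E 2 μ) :
    ⇑(Qop μ ω f) =ᵐ[μ] (Set.Iic ω).indicator (fun x => f x) :=
  MemLp.coeFn_toLp (memLp_ind μ ω f)

end LpStuff

/-- For every integer `m ≥ 1` and every pair `0 ≤ k ≤ m` there is a constant
`C(m,k) > 0` such that for every `ω > 0` there exists a bounded linear operator `Q : H → H`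
with range contained in `PW_ω(D)` satisfying
`‖Q f − f‖ ≤ (C(m,k)/ω^k) Ω_{m−k}(D^k f, 1/ω)` for every `f ∈ Dom(D^k)`; consequently
`E(f,ω) ≤ (C(m,k)/ω^k) Ω_{m−k}(D^k f, 1/ω)`. -/
theorem jackson_operator
    (μ : Measure ℝ) [SigmaFinite μ] (hμ : μ (Set.Iio 0) = 0)
    (m k : ℕ) (hm : 1 ≤ m) (hk : k ≤ m) :
    ∃ C : ℝ, 0 < C ∧ ∀ ω : ℝ, 0 < ω →
      ∃ Q : Lp E 2 μ →L[ℂ] Lp E 2 μ,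
        (∀ f : Lp E 2 μ, Q f ∈ PW (E := E) μ ω) ∧
        ∀ f : Lp E 2 μ, ∀ hf : MemLp (fun x : ℝ => x ^ k • f x) 2 μ,
          ‖Q f - f‖ ≤ C / ω ^ k * Omega μ (m - k) (hf.toLp _) (1 / ω) ∧
          bestApprox μ f ω ≤ C / ω ^ k * Omega μ (m - k) (hf.toLp _) (1 / ω) := by
  have hπ := Real.pi_pos
  set n := m - k with hn
  set cc : ℝ := (1/4)^n / (2*n+1) / (4 * π) with hcc
  have hccpos : 0 < cc := by positivity
  set C := 1 / Real.sqrt cc with hC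
  have hCpos : 0 < C := by positivity
  refine ⟨C, hCpos, ?_⟩
  intro ω hω
  have hPW : ∀ f : Lp E 2 μ, Qop μ ω f ∈ PW (E := E) μ ω := by
    intro f
    filter_upwards [coeFn_Qop μ ω f] with x hx hωx
    rw [hx, Set.indicator_of_notMem]
    simpa using hωx
  refine ⟨Qop μ ω, hPW, ?_⟩
  intro f hf
  set s := 1 / ω with hs_def
  have hs : 0 < s := by positivity
  set g := hf.toLp _ with hg_def
  set Ω := Omega μ n g s with hΩ_def
  have hΩ0 : 0 ≤ Ω := omega_nonneg μ n g s
  suffices hmain : ‖Qop μ ω f - f‖ ≤ C / ω ^ k * Ω by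
    refine ⟨hmain, ?_⟩
    calc bestApprox μ f ω ≤ ‖f - ((⟨Qop μ ω f, hPW f⟩ : PW (E := E) μ ω) : Lp E 2 μ)‖ :=
          ciInf_le ⟨0, by rintro r ⟨g0, rfl⟩; exact norm_nonneg _⟩ _
    _ = ‖Qop μ ω f - f‖ := norm_sub_rev _ _
    _ ≤ C / ω ^ k * Ω := hmain
  -- main estimate
  set G : ℝ → ℝ≥0∞ := fun x => (‖g x‖₊ : ℝ≥0∞) ^ 2 with hG
  have hGmeas : AEMeasurable G μ := ((Lp.aestronglyMeasurable g).enorm).pow_const 2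
  have hrep : ∀ τ : ℝ, (eLpNorm (⇑(Delta μ τ n g)) 2 μ) ^ 2
      = ∫⁻ x, ENNReal.ofReal (Fn n (τ * x)) * G x ∂μ := by
    intro τ
    rw [eLpNorm_congr_ae (delta_ae μ τ n g), sq_eLpNorm]
    exact lintegral_congr fun x => mul_rep n τ x (g x)
  have hfin : ∀ τ : ℝ, |τ| ≤ s →
      ∫⁻ x, ENNReal.ofReal (Fn n (τ * x)) * G x ∂μ ≤ ENNReal.ofReal (Ω ^ 2) := by
    intro τ hτ
    rw [← hrep τ]
    have h1 : eLpNorm (⇑(Delta μ τ n g)) 2 μ = ENNReal.ofReal ‖Delta μ τ n g‖ := by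
      rw [Lp.norm_def, ENNReal.ofReal_toReal (Lp.eLpNorm_ne_top _)]
    rw [h1, ← ENNReal.ofReal_pow (norm_nonneg _)]
    exact ENNReal.ofReal_le_ofReal
      (pow_le_pow_left₀ (norm_nonneg _) (norm_delta_le_omega μ n g hτ) 2)
  have hφmeas : Measurable (fun p : ℝ × ℝ => ENNReal.ofReal (Fn n (p.1 * p.2))) :=
    ENNReal.measurable_ofReal.comp
      ((Fn_continuous n).comp (continuous_fst.mul continuous_snd)).measurable
  have hprod : AEMeasurable
      (Function.uncurry fun τ x => ENNReal.ofReal (Fn n (τ * x)) * G x)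
      ((volume.restrict (Set.Ioc (0:ℝ) s)).prod μ) := by
    refine AEMeasurable.mul (f := fun p : ℝ × ℝ => ENNReal.ofReal (Fn n (p.1 * p.2))) (g := fun p => G p.2) ?_ ?_
    · exact hφmeas.aemeasurable
    · exact hGmeas.comp_quasiMeasurePreserving Measure.quasiMeasurePreserving_snd
  have hswap : ∫⁻ τ in Set.Ioc (0:ℝ) s, ∫⁻ x, ENNReal.ofReal (Fn n (τ * x)) * G x ∂μ
      = ∫⁻ x, (∫⁻ τ in Set.Ioc (0:ℝ) s, ENNReal.ofReal (Fn n (τ * x))) * G x ∂μ := by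
    rw [lintegral_lintegral_swap hprod]
    refine lintegral_congr fun x => ?_
    exact lintegral_mul_const'' _
      (ENNReal.measurable_ofReal.comp
        ((Fn_continuous n).measurable.comp (measurable_mul_const x))).aemeasurable
  have hupper : ∫⁻ τ in Set.Ioc (0:ℝ) s, ∫⁻ x, ENNReal.ofReal (Fn n (τ * x)) * G x ∂μ
      ≤ ENNReal.ofReal s * ENNReal.ofReal (Ω ^ 2) := by
    calc ∫⁻ τ in Set.Ioc (0:ℝ) s, ∫⁻ x, ENNReal.ofReal (Fn n (τ * x)) * G x ∂μ
        ≤ ∫⁻ _ in Set.Ioc (0:ℝ) s, ENNReal.ofReal (Ω ^ 2) := by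
          refine setLIntegral_mono' measurableSet_Ioc fun τ hτ => ?_
          exact hfin τ (by rw [abs_of_pos hτ.1]; exact hτ.2)
    _ = ENNReal.ofReal (Ω ^ 2) * volume (Set.Ioc (0:ℝ) s) := setLIntegral_const _ _
    _ = ENNReal.ofReal s * ENNReal.ofReal (Ω ^ 2) := by
          rw [Real.volume_Ioc, sub_zero, mul_comm]
  have hIx : ∀ x : ℝ, ω < x →
      ENNReal.ofReal (cc * s) ≤ ∫⁻ τ in Set.Ioc (0:ℝ) s, ENNReal.ofReal (Fn n (τ * x)) := by
    intro x hx
    have hx0 : 0 < x := lt_trans hω hx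
    have hxs : 1 ≤ x * s := by
      rw [hs_def, ← div_eq_mul_one_div, le_div_iff₀ hω]
      linarith
    have hint : IntegrableOn (fun τ : ℝ => Fn n (τ * x)) (Set.Ioc 0 s) volume :=
      ((Fn_continuous n).comp (continuous_id.mul continuous_const)).integrableOn_Ioc
    have heq : ∫⁻ τ in Set.Ioc (0:ℝ) s, ENNReal.ofReal (Fn n (τ * x))
        = ENNReal.ofReal (∫ τ in Set.Ioc (0:ℝ) s, Fn n (τ * x)) :=
      (ofReal_integral_eq_lintegral_ofReal hint
        (ae_of_all _ fun τ => Fn_nonneg n _)).symm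
    rw [heq]
    apply ENNReal.ofReal_le_ofReal
    have h2 := I_lower n hs hx0 hxs
    rwa [intervalIntegral.integral_of_le hs.le] at h2
  set A := ∫⁻ x in Set.Ioi ω, (‖f x‖₊ : ℝ≥0∞) ^ 2 ∂μ with hA
  have hgf : ⇑g =ᵐ[μ] fun x : ℝ => x ^ k • f x := MemLp.coeFn_toLp hf
  have hlow2 : ∫⁻ x in Set.Ioi ω,
        ENNReal.ofReal (cc * s) * (ENNReal.ofReal (ω ^ k) ^ 2 * (‖f x‖₊ : ℝ≥0∞) ^ 2) ∂μ
      ≤ ∫⁻ x in Set.Ioi ω,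
        (∫⁻ τ in Set.Ioc (0:ℝ) s, ENNReal.ofReal (Fn n (τ * x))) * G x ∂μ := by
    refine lintegral_mono_ae ?_
    rw [ae_restrict_iff' measurableSet_Ioi]
    filter_upwards [hgf] with x hgx hx
    refine mul_le_mul' (hIx x hx) ?_
    have h2 : ENNReal.ofReal (ω ^ k) ≤ (‖(x:ℝ) ^ k‖₊ : ℝ≥0∞) := by
      rw [← enorm_eq_nnnorm, ← ofReal_norm]
      apply ENNReal.ofReal_le_ofReal
      rw [Real.norm_eq_abs, _root_.abs_pow]
      exact pow_le_pow_left₀ hω.le (le_of_lt (lt_of_lt_of_le hx (le_abs_self x))) k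
    calc ENNReal.ofReal (ω ^ k) ^ 2 * (‖f x‖₊ : ℝ≥0∞) ^ 2
        = (ENNReal.ofReal (ω ^ k) * (‖f x‖₊ : ℝ≥0∞)) ^ 2 := (mul_pow _ _ _).symm
    _ ≤ ((‖(x:ℝ) ^ k‖₊ : ℝ≥0∞) * (‖f x‖₊ : ℝ≥0∞)) ^ 2 :=
        pow_le_pow_left' (mul_le_mul_left h2 _) 2
    _ = G x := by
        simp only [hG]
        rw [hgx, nnnorm_smul, ENNReal.coe_mul]
  have hpull : ∫⁻ x in Set.Ioi ω,
        ENNReal.ofReal (cc * s) * (ENNReal.ofReal (ω ^ k) ^ 2 * (‖f x‖₊ : ℝ≥0∞) ^ 2) ∂μ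
      = ENNReal.ofReal (cc * s) * (ENNReal.ofReal (ω ^ k) ^ 2 * A) := by
    have hfm : AEMeasurable (fun x => (‖f x‖₊ : ℝ≥0∞) ^ 2) (μ.restrict (Set.Ioi ω)) :=
      ((Lp.aestronglyMeasurable f).enorm.pow_const 2).restrict
    rw [lintegral_const_mul'' _ (hfm.const_mul _), lintegral_const_mul'' _ hfm]
  have hchain : ENNReal.ofReal (cc * s) * (ENNReal.ofReal (ω ^ k) ^ 2 * A)
      ≤ ENNReal.ofReal s * ENNReal.ofReal (Ω ^ 2) := by
    calc ENNReal.ofReal (cc * s) * (ENNReal.ofReal (ω ^ k) ^ 2 * A)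
        = ∫⁻ x in Set.Ioi ω,
            ENNReal.ofReal (cc * s) * (ENNReal.ofReal (ω ^ k) ^ 2 * (‖f x‖₊ : ℝ≥0∞) ^ 2) ∂μ :=
          hpull.symm
    _ ≤ ∫⁻ x in Set.Ioi ω,
          (∫⁻ τ in Set.Ioc (0:ℝ) s, ENNReal.ofReal (Fn n (τ * x))) * G x ∂μ := hlow2
    _ ≤ ∫⁻ x, (∫⁻ τ in Set.Ioc (0:ℝ) s, ENNReal.ofReal (Fn n (τ * x))) * G x ∂μ :=
          setLIntegral_le_lintegral _ _
    _ = ∫⁻ τ in Set.Ioc (0:ℝ) s, ∫⁻ x, ENNReal.ofReal (Fn n (τ * x)) * G x ∂μ := hswap.symm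
    _ ≤ ENNReal.ofReal s * ENNReal.ofReal (Ω ^ 2) := hupper
  have hcancel : ENNReal.ofReal cc * (ENNReal.ofReal (ω ^ k) ^ 2 * A)
      ≤ ENNReal.ofReal (Ω ^ 2) := by
    have h0 : ENNReal.ofReal s ≠ 0 := by
      simp only [ne_eq, ENNReal.ofReal_eq_zero, not_le]
      exact hs
    refine (ENNReal.mul_le_mul_iff_right h0 ENNReal.ofReal_ne_top).mp ?_
    calc ENNReal.ofReal s * (ENNReal.ofReal cc * (ENNReal.ofReal (ω ^ k) ^ 2 * A))
        = ENNReal.ofReal (cc * s) * (ENNReal.ofReal (ω ^ k) ^ 2 * A) := by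
          rw [ENNReal.ofReal_mul hccpos.le]; ring
    _ ≤ ENNReal.ofReal s * ENNReal.ofReal (Ω ^ 2) := hchain
  have hQA : (eLpNorm (⇑(Qop μ ω f - f)) 2 μ) ^ 2 = A := by
    rw [sq_eLpNorm]
    have hae : ∀ᵐ x ∂μ, ((‖(Qop μ ω f - f) x‖₊ : ℝ≥0∞)) ^ 2
        = (Set.Ioi ω).indicator (fun x => (‖f x‖₊ : ℝ≥0∞) ^ 2) x := by
      filter_upwards [Lp.coeFn_sub (Qop μ ω f) f, coeFn_Qop μ ω f] with x hx1 hx2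
      rw [hx1]
      simp only [Pi.sub_apply]
      rw [hx2]
      by_cases h : x ≤ ω
      · rw [Set.indicator_of_mem (Set.mem_Iic.mpr h),
          Set.indicator_of_notMem (by simpa using not_lt.mpr h)]
        simp
      · rw [Set.indicator_of_notMem (by simpa using h),
          Set.indicator_of_mem (Set.mem_Ioi.mpr (not_le.mp h)), zero_sub, nnnorm_neg]
    rw [lintegral_congr_ae hae, lintegral_indicator measurableSet_Ioi]
  have hAne : A ≠ ∞ := by
    rw [← hQA]
    exact ENNReal.pow_ne_top (Lp.eLpNorm_ne_top _)
  have hreal : cc * (ω ^ k) ^ 2 * A.toReal ≤ Ω ^ 2 := by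
    have h1 : ENNReal.ofReal (cc * (ω ^ k) ^ 2) * A ≤ ENNReal.ofReal (Ω ^ 2) := by
      rw [ENNReal.ofReal_mul hccpos.le, ENNReal.ofReal_pow (pow_nonneg hω.le k), mul_assoc]
      exact hcancel
    have h2 := ENNReal.toReal_mono (by simp) h1
    rw [ENNReal.toReal_mul, ENNReal.toReal_ofReal (by positivity),
      ENNReal.toReal_ofReal (sq_nonneg Ω)] at h2
    exact h2
  have ht : ‖Qop μ ω f - f‖ ^ 2 = A.toReal := by
    rw [Lp.norm_def, ← ENNReal.toReal_pow, hQA]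
  have hC2 : C ^ 2 = 1 / cc := by
    rw [hC, div_pow, one_pow, Real.sq_sqrt hccpos.le]
  have hRHS0 : 0 ≤ C / ω ^ k * Ω :=
    mul_nonneg (div_nonneg hCpos.le (pow_nonneg hω.le k)) hΩ0
  have hsq : ‖Qop μ ω f - f‖ ^ 2 ≤ (C / ω ^ k * Ω) ^ 2 := by
    rw [ht]
    have hR : (C / ω ^ k * Ω) ^ 2 = Ω ^ 2 / (cc * (ω ^ k) ^ 2) := by
      rw [mul_pow, div_pow, hC2]
      field_simp
    rw [hR, le_div_iff₀ (by positivity)]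
    nlinarith [hreal]
  have h1 := Real.sqrt_le_sqrt hsq
  rwa [Real.sqrt_sq (norm_nonneg _), Real.sqrt_sq hRHS0] at h1
end
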